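/- arXiv:1503.05612 — 4 statements merged into one kernel-verified Lean document; each statement's English description precedes it below -/
import Mathlib

section
/- (Janson's inequality, graph version.) Let p ∈ (0,1), let G ~ G(n,p), and let {H_i}_{i ∈ I} be a finite family of subgraphs of the complete graph on vertex set {1, …, n}. For each i ∈ I let X_i be the indicator random variable of the event H_i ⊆ G, and for an ordered pair (i, j) with i ≠ j write H_i ~ H_j if E(H_i) ∩ E(H_j) ≠ ∅. Set X = Σ_{i ∈ I} X_i, μ = E[X] = Σ_{i ∈ I} p^{e(H_i)}, and δ = Σ_{(i,j): i ≠ j, H_i ~ H_j} p^{e(H_i) + e(H_j) − e(H_i ∩ H_j)}. Then for every 0 < γ < 1, Pr[X < (1−γ)μ] ≤ exp(−γ²μ² / (2(μ + δ))). -/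
open Finset Filter Real
open scoped Classical

/-- Number of edges of a graph. -/
noncomputable def edgeCount {α : Type*} (G : SimpleGraph α) : ℕ := Nat.card G.edgeSet

variable {n : ℕ}

lemma edgeCount_ncard (G : SimpleGraph (Fin n)) : edgeCount G = G.edgeSet.ncard :=
  Nat.card_coe_set_eq _

lemma edgeCount_top : edgeCount (⊤ : SimpleGraph (Fin n)) = n.choose 2 := by
  have h := SimpleGraph.card_edgeFinset_top_eq_card_choose_two (V := Fin n)
  rw [Fintype.card_fin] at h
  rw [edgeCount, Nat.card_eq_fintype_card, ← SimpleGraph.edgeFinset_card, ← h]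

lemma edgeCount_mono {A B : SimpleGraph (Fin n)} (h : A ≤ B) : edgeCount A ≤ edgeCount B := by
  rw [edgeCount_ncard, edgeCount_ncard]
  exact Set.ncard_le_ncard (SimpleGraph.edgeSet_mono h) (Set.toFinite _)

lemma edgeCount_le (A : SimpleGraph (Fin n)) : edgeCount A ≤ n.choose 2 := by
  rw [← edgeCount_top]; exact edgeCount_mono le_top

lemma edgeCount_inf_add_sup (A B : SimpleGraph (Fin n)) :
    edgeCount (A ⊓ B) + edgeCount (A ⊔ B) = edgeCount A + edgeCount B := by
  simp only [edgeCount_ncard, SimpleGraph.edgeSet_inf, SimpleGraph.edgeSet_sup]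
  exact Set.ncard_inter_add_ncard_union _ _ (Set.toFinite _) (Set.toFinite _)

lemma edgeCount_bot : edgeCount (⊥ : SimpleGraph (Fin n)) = 0 := by
  simp [edgeCount_ncard]

lemma edgeCount_fromEdgeSet (s : Finset (Sym2 (Fin n))) (hs : ∀ e ∈ s, ¬e.IsDiag) :
    edgeCount (SimpleGraph.fromEdgeSet (↑s : Set (Sym2 (Fin n)))) = s.card := by
  rw [edgeCount_ncard, SimpleGraph.edgeSet_fromEdgeSet]
  rw [show (↑s \ Sym2.diagSet) = (↑s : Set (Sym2 (Fin n))) from by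
    ext e; exact ⟨fun he => he.1, fun he => ⟨he, hs e he⟩⟩]
  exact Set.ncard_coe_finset s

lemma edgeCount_sdiff_add_inf (G K : SimpleGraph (Fin n)) :
    edgeCount (G ⊓ K) + edgeCount (G \ K) = edgeCount G := by
  have h1 : (G ⊓ K) ⊓ (G \ K) = ⊥ := by
    rw [inf_assoc]
    simp [inf_sdiff_self_left]
  have h2 : (G ⊓ K) ⊔ (G \ K) = G := sup_inf_sdiff G K
  have := edgeCount_inf_add_sup (G ⊓ K) (G \ K)
  rw [h1, h2, edgeCount_bot] at this
  omega

/-- conditional weight of `A` inside `K` (intended for `A ≤ K`). -/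
noncomputable def WC (p : ℝ) (K A : SimpleGraph (Fin n)) : ℝ :=
  p ^ edgeCount A * (1 - p) ^ (edgeCount K - edgeCount A)

lemma edgeCount_compl_add (K : SimpleGraph (Fin n)) :
    edgeCount K + edgeCount Kᶜ = n.choose 2 := by
  have h := edgeCount_sdiff_add_inf (⊤ : SimpleGraph (Fin n)) K
  rw [top_inf_eq, top_sdiff, edgeCount_top] at h
  omega

lemma sdiff_le_compl (G K : SimpleGraph (Fin n)) : G \ K ≤ Kᶜ := by
  rw [sdiff_eq]; exact inf_le_right

lemma WC_factor (p : ℝ) (G K : SimpleGraph (Fin n)) :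
    p ^ edgeCount G * (1 - p) ^ (n.choose 2 - edgeCount G)
      = WC p K (G ⊓ K) * WC p Kᶜ (G \ K) := by
  have h1 := edgeCount_sdiff_add_inf G K
  have h2 : edgeCount (G ⊓ K) ≤ edgeCount K := edgeCount_mono inf_le_right
  have h3 : edgeCount (G \ K) ≤ edgeCount Kᶜ := edgeCount_mono (sdiff_le_compl G K)
  have h4 := edgeCount_compl_add K
  have h5 : edgeCount G ≤ n.choose 2 := edgeCount_le G
  rw [WC, WC, show edgeCount G = edgeCount (G ⊓ K) + edgeCount (G \ K) from h1.symm,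
    show n.choose 2 - (edgeCount (G ⊓ K) + edgeCount (G \ K))
      = (edgeCount K - edgeCount (G ⊓ K)) + (edgeCount Kᶜ - edgeCount (G \ K)) by omega,
    pow_add, pow_add]
  ring

lemma sup_inf_of_le {A B K : SimpleGraph (Fin n)} (hA : A ≤ K) (hB : B ≤ Kᶜ) :
    (A ⊔ B) ⊓ K = A := by
  have hdisj : Disjoint B K := (disjoint_compl_left (a := K)).mono_left hB
  rw [inf_sup_right, inf_eq_left.2 hA, disjoint_iff.1 hdisj, sup_bot_eq]

lemma sup_sdiff_of_le {A B K : SimpleGraph (Fin n)} (hA : A ≤ K) (hB : B ≤ Kᶜ) :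
    (A ⊔ B) \ K = B := by
  have hdisj : Disjoint B K := (disjoint_compl_left (a := K)).mono_left hB
  rw [sup_sdiff, sdiff_eq_bot_iff.2 hA, bot_sup_eq, sdiff_eq_self_iff_disjoint.2 hdisj.symm]

def splitEquiv (K : SimpleGraph (Fin n)) :
    SimpleGraph (Fin n) ≃ {A : SimpleGraph (Fin n) // A ≤ K} × {B : SimpleGraph (Fin n) // B ≤ Kᶜ} where
  toFun G := (⟨G ⊓ K, inf_le_right⟩, ⟨G \ K, sdiff_le_compl G K⟩)
  invFun AB := AB.1.1 ⊔ AB.2.1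
  left_inv G := sup_inf_sdiff G K
  right_inv := by
    rintro ⟨⟨A, hA⟩, ⟨B, hB⟩⟩
    exact Prod.ext (Subtype.ext (sup_inf_of_le hA hB)) (Subtype.ext (sup_sdiff_of_le hA hB))

lemma sum_powerset_binom {β : Type*} [DecidableEq β] (s : Finset β) (x y : ℝ) :
    ∑ t ∈ s.powerset, x ^ t.card * y ^ (s.card - t.card) = (x + y) ^ s.card := by
  induction s using Finset.induction_on with
  | empty => simp
  | insert a s ha ih =>
    rw [Finset.sum_powerset_insert ha, Finset.card_insert_of_notMem ha]
    have e1 : ∀ t ∈ s.powerset, x ^ t.card * y ^ (s.card + 1 - t.card)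
        = y * (x ^ t.card * y ^ (s.card - t.card)) := by
      intro t ht
      have : t.card ≤ s.card := Finset.card_le_card (Finset.mem_powerset.1 ht)
      rw [show s.card + 1 - t.card = (s.card - t.card) + 1 by omega, pow_succ]
      ring
    have e2 : ∀ t ∈ s.powerset, x ^ (insert a t).card * y ^ (s.card + 1 - (insert a t).card)
        = x * (x ^ t.card * y ^ (s.card - t.card)) := by
      intro t ht
      have hat : a ∉ t := fun h => ha (Finset.mem_powerset.1 ht h)
      have : t.card ≤ s.card := Finset.card_le_card (Finset.mem_powerset.1 ht)
      rw [Finset.card_insert_of_notMem hat,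
        show s.card + 1 - (t.card + 1) = s.card - t.card by omega, pow_succ]
      ring
    rw [Finset.sum_congr rfl e1, Finset.sum_congr rfl e2, ← Finset.mul_sum, ← Finset.mul_sum,
      ih, pow_succ]
    ring

/-- sum over subgraphs of `K` as a sum over subsets of its edge finset. -/
lemma sum_subgraphs_eq (K : SimpleGraph (Fin n)) (F : SimpleGraph (Fin n) → ℝ) :
    ∑ A : {A : SimpleGraph (Fin n) // A ≤ K}, F A.1
      = ∑ s ∈ K.edgeFinset.powerset, F (SimpleGraph.fromEdgeSet ↑s) := by
  refine Finset.sum_nbij' (i := fun A => A.1.edgeFinset)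
    (j := fun s => ⟨SimpleGraph.fromEdgeSet ↑s ⊓ K, inf_le_right⟩) ?_ ?_ ?_ ?_ ?_
  · intro A _
    exact Finset.mem_powerset.2 (Set.toFinset_subset_toFinset.2 (SimpleGraph.edgeSet_mono A.2))
  · intro s _
    exact Finset.mem_univ _
  · intro A _
    apply Subtype.ext
    show SimpleGraph.fromEdgeSet ↑(A.1.edgeFinset) ⊓ K = A.1
    rw [SimpleGraph.coe_edgeFinset, SimpleGraph.fromEdgeSet_edgeSet]
    exact inf_eq_left.2 A.2
  · intro s hs
    have hsub : ∀ e ∈ s, e ∈ K.edgeSet := fun e he =>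
      SimpleGraph.mem_edgeFinset.1 (Finset.mem_powerset.1 hs he)
    dsimp only
    ext e
    simp only [SimpleGraph.mem_edgeFinset, SimpleGraph.edgeSet_inf,
      SimpleGraph.edgeSet_fromEdgeSet, Set.mem_inter_iff, Set.mem_diff, Finset.mem_coe,
      Set.mem_setOf_eq]
    constructor
    · rintro ⟨⟨he, -⟩, -⟩
      exact he
    · intro he
      exact ⟨⟨he, SimpleGraph.not_isDiag_of_mem_edgeSet K (hsub e he)⟩, hsub e he⟩
  · intro A _
    show F A.1 = F (SimpleGraph.fromEdgeSet ↑(A.1.edgeFinset))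
    rw [SimpleGraph.coe_edgeFinset, SimpleGraph.fromEdgeSet_edgeSet]

lemma edgeCount_eq_toFinset (K : SimpleGraph (Fin n)) : edgeCount K = K.edgeFinset.card := by
  rw [edgeCount_ncard]; exact Set.ncard_eq_toFinset_card' _

lemma sum_WC (p : ℝ) (K : SimpleGraph (Fin n)) :
    ∑ A : {A : SimpleGraph (Fin n) // A ≤ K}, WC p K A.1 = 1 := by
  rw [sum_subgraphs_eq K (WC p K)]
  have h : ∀ s ∈ K.edgeFinset.powerset,
      WC p K (SimpleGraph.fromEdgeSet ↑s)
        = p ^ s.card * (1 - p) ^ (K.edgeFinset.card - s.card) := by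
    intro s hs
    have hsub : ∀ e ∈ s, e ∈ K.edgeSet := fun e he =>
      SimpleGraph.mem_edgeFinset.1 (Finset.mem_powerset.1 hs he)
    rw [WC, edgeCount_fromEdgeSet s
      (fun e he => SimpleGraph.not_isDiag_of_mem_edgeSet K (hsub e he)),
      edgeCount_eq_toFinset]
  rw [Finset.sum_congr rfl h, sum_powerset_binom]
  simp

noncomputable def W (n : ℕ) (p : ℝ) (G : SimpleGraph (Fin n)) : ℝ :=
  p ^ edgeCount G * (1 - p) ^ (n.choose 2 - edgeCount G)

lemma W_eq_WC (p : ℝ) (G : SimpleGraph (Fin n)) : W n p G = WC p ⊤ G := by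
  rw [W, WC, edgeCount_top]

lemma sum_W (p : ℝ) : ∑ G : SimpleGraph (Fin n), W n p G = 1 := by
  have h : ∑ A : {A : SimpleGraph (Fin n) // A ≤ ⊤}, W n p A.1 = 1 := by
    have h2 : ∀ A : {A : SimpleGraph (Fin n) // A ≤ ⊤}, W n p A.1 = WC p ⊤ A.1 :=
      fun A => W_eq_WC p A.1
    rw [Fintype.sum_congr _ _ h2, sum_WC]
  rw [← Equiv.sum_comp ((Equiv.subtypeUnivEquiv fun _ => le_top) :
    {A : SimpleGraph (Fin n) // A ≤ ⊤} ≃ SimpleGraph (Fin n)) (fun G => W n p G)]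
  exact h

lemma sum_split (p : ℝ) (K : SimpleGraph (Fin n)) (g : SimpleGraph (Fin n) → ℝ) :
    ∑ G : SimpleGraph (Fin n), W n p G * g G
      = ∑ AB : {A : SimpleGraph (Fin n) // A ≤ K} × {B : SimpleGraph (Fin n) // B ≤ Kᶜ},
          WC p K AB.1.1 * WC p Kᶜ AB.2.1 * g (AB.1.1 ⊔ AB.2.1) := by
  apply Fintype.sum_equiv (splitEquiv K)
  intro G
  show W n p G * g G = WC p K (G ⊓ K) * WC p Kᶜ (G \ K) * g ((G ⊓ K) ⊔ (G \ K))
  rw [sup_inf_sdiff, W, WC_factor p G K]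

lemma indep (p : ℝ) (K : SimpleGraph (Fin n)) (f : SimpleGraph (Fin n) → ℝ)
    (hf : ∀ G, f (G \ K) = f G) :
    ∑ G : SimpleGraph (Fin n), W n p G * ((if K ≤ G then (1:ℝ) else 0) * f G)
      = p ^ edgeCount K * ∑ G : SimpleGraph (Fin n), W n p G * f G := by
  rw [sum_split p K, sum_split p K]
  rw [Fintype.sum_prod_type, Fintype.sum_prod_type]
  have hL : ∀ (A : {A : SimpleGraph (Fin n) // A ≤ K})
      (B : {B : SimpleGraph (Fin n) // B ≤ Kᶜ}),
      WC p K A.1 * WC p Kᶜ B.1 * ((if K ≤ A.1 ⊔ B.1 then (1:ℝ) else 0) * f (A.1 ⊔ B.1))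
        = ((if A = ⟨K, le_rfl⟩ then (1:ℝ) else 0) * WC p K A.1) * (WC p Kᶜ B.1 * f B.1) := by
    intro A B
    have hfB : f (A.1 ⊔ B.1) = f B.1 := by
      rw [← hf (A.1 ⊔ B.1), sup_sdiff_of_le A.2 B.2]
    have hind : (if K ≤ A.1 ⊔ B.1 then (1:ℝ) else 0)
        = (if A = ⟨K, le_rfl⟩ then (1:ℝ) else 0) := by
      congr 1
      simp only [eq_iff_iff]
      constructor
      · intro h
        apply Subtype.ext
        show A.1 = K
        rw [← sup_inf_of_le A.2 B.2, inf_eq_right.2 h]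
      · rintro rfl
        exact le_sup_left
    rw [hfB, hind]; ring
  have hR : ∀ (A : {A : SimpleGraph (Fin n) // A ≤ K})
      (B : {B : SimpleGraph (Fin n) // B ≤ Kᶜ}),
      WC p K A.1 * WC p Kᶜ B.1 * f (A.1 ⊔ B.1)
        = WC p K A.1 * (WC p Kᶜ B.1 * f B.1) := by
    intro A B
    have hfB : f (A.1 ⊔ B.1) = f B.1 := by
      rw [← hf (A.1 ⊔ B.1), sup_sdiff_of_le A.2 B.2]
    rw [hfB]; ring
  simp_rw [hL, hR]
  rw [← Finset.sum_mul_sum, ← Finset.sum_mul_sum]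
  have h1 : ∑ A : {A : SimpleGraph (Fin n) // A ≤ K},
      (if A = ⟨K, le_rfl⟩ then (1:ℝ) else 0) * WC p K A.1 = p ^ edgeCount K := by
    simp_rw [ite_mul, one_mul, zero_mul]
    rw [Finset.sum_ite_eq' (Finset.univ : Finset {A : SimpleGraph (Fin n) // A ≤ K})
      (⟨K, le_rfl⟩ : {A : SimpleGraph (Fin n) // A ≤ K}) (fun A => WC p K A.1)]
    simp [WC]
  rw [h1, sum_WC, one_mul]

section Janson

variable {ι : Type*} [Fintype ι]

noncomputable def indic (K G : SimpleGraph (Fin n)) : ℝ := if K ≤ G then 1 else 0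

lemma indic_nonneg (K G : SimpleGraph (Fin n)) : 0 ≤ indic K G := by
  rw [indic]; split <;> norm_num

lemma indic_le_one (K G : SimpleGraph (Fin n)) : indic K G ≤ 1 := by
  rw [indic]; split <;> norm_num

lemma indic_mono (K : SimpleGraph (Fin n)) : Monotone (indic K) := by
  intro a b hab
  rw [indic, indic]
  by_cases h : K ≤ a
  · rw [if_pos h, if_pos (h.trans hab)]
  · rw [if_neg h]; split <;> norm_num

lemma indic_inf_sup (K a b : SimpleGraph (Fin n)) :
    indic K a * indic K b = indic K (a ⊓ b) * indic K (a ⊔ b) := by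
  simp only [indic]
  by_cases ha : K ≤ a <;> by_cases hb : K ≤ b
  · rw [if_pos ha, if_pos hb, if_pos (le_inf ha hb), if_pos (le_trans ha le_sup_left)]
  all_goals simp [ha, hb, le_inf_iff]

noncomputable def Xf (H : ι → SimpleGraph (Fin n)) (G : SimpleGraph (Fin n)) : ℝ :=
  ∑ i : ι, indic (H i) G

noncomputable def Yf (H : ι → SimpleGraph (Fin n)) (i : ι) (G : SimpleGraph (Fin n)) : ℝ :=
  ∑ j : ι, if (H i ⊓ H j).edgeSet.Nonempty then indic (H j) G else 0

noncomputable def Zf (H : ι → SimpleGraph (Fin n)) (i : ι) (G : SimpleGraph (Fin n)) : ℝ :=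
  ∑ j : ι, if ¬(H i ⊓ H j).edgeSet.Nonempty then indic (H j) G else 0

lemma Xf_eq_add (H : ι → SimpleGraph (Fin n)) (i : ι) (G : SimpleGraph (Fin n)) :
    Xf H G = Yf H i G + Zf H i G := by
  rw [Xf, Yf, Zf, ← Finset.sum_add_distrib]
  refine Finset.sum_congr rfl fun j _ => ?_
  by_cases h : (H i ⊓ H j).edgeSet.Nonempty
  · rw [if_pos h, if_neg (not_not_intro h), add_zero]
  · rw [if_neg h, if_pos h, zero_add]

lemma Xf_nonneg (H : ι → SimpleGraph (Fin n)) (G : SimpleGraph (Fin n)) : 0 ≤ Xf H G :=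
  Finset.sum_nonneg fun i _ => indic_nonneg _ _

lemma Yf_nonneg (H : ι → SimpleGraph (Fin n)) (i : ι) (G : SimpleGraph (Fin n)) :
    0 ≤ Yf H i G := by
  refine Finset.sum_nonneg fun j _ => ?_
  split <;> norm_num [indic_nonneg]

lemma Zf_nonneg (H : ι → SimpleGraph (Fin n)) (i : ι) (G : SimpleGraph (Fin n)) :
    0 ≤ Zf H i G := by
  refine Finset.sum_nonneg fun j _ => ?_
  split <;> norm_num [indic_nonneg]

lemma Zf_le_Xf (H : ι → SimpleGraph (Fin n)) (i : ι) (G : SimpleGraph (Fin n)) :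
    Zf H i G ≤ Xf H G := by
  rw [Xf_eq_add H i G]
  have := Yf_nonneg H i G
  linarith

lemma Yf_mono (H : ι → SimpleGraph (Fin n)) (i : ι) : Monotone (Yf H i) := by
  intro a b hab
  refine Finset.sum_le_sum fun j _ => ?_
  split
  · exact indic_mono _ hab
  · exact le_rfl

lemma Zf_mono (H : ι → SimpleGraph (Fin n)) (i : ι) : Monotone (Zf H i) := by
  intro a b hab
  refine Finset.sum_le_sum fun j _ => ?_
  split
  · exact indic_mono _ hab
  · exact le_rfl

lemma Zf_sdiff (H : ι → SimpleGraph (Fin n)) (i : ι) (G : SimpleGraph (Fin n)) :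
    Zf H i (G \ H i) = Zf H i G := by
  refine Finset.sum_congr rfl fun j _ => ?_
  by_cases h : (H i ⊓ H j).edgeSet.Nonempty
  · simp only [if_neg (not_not_intro h)]
  · have hdisj : Disjoint (H j) (H i) := by
      rw [disjoint_comm, ← SimpleGraph.disjoint_edgeSet, Set.disjoint_iff_inter_eq_empty,
        ← SimpleGraph.edgeSet_inf]
      exact Set.not_nonempty_iff_eq_empty.1 h
    simp only [if_pos h, indic, le_sdiff, and_iff_left hdisj]

lemma W_nonneg (hp0 : 0 ≤ p) (hp1 : p ≤ 1) (G : SimpleGraph (Fin n)) : 0 ≤ W n p G :=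
  mul_nonneg (pow_nonneg hp0 _) (pow_nonneg (by linarith) _)

lemma W_pos (hp0 : 0 < p) (hp1 : p < 1) (G : SimpleGraph (Fin n)) : 0 < W n p G :=
  mul_pos (pow_pos hp0 _) (pow_pos (by linarith) _)

lemma W_inf_sup (a b : SimpleGraph (Fin n)) : W n p a * W n p b = W n p (a ⊓ b) * W n p (a ⊔ b) := by
  have h1 := edgeCount_inf_add_sup a b
  have h2 : edgeCount (a ⊓ b) ≤ edgeCount a := edgeCount_mono inf_le_left
  have h3 : edgeCount a ≤ n.choose 2 := edgeCount_le a
  have h4 : edgeCount b ≤ n.choose 2 := edgeCount_le b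
  have h5 : edgeCount (a ⊔ b) ≤ n.choose 2 := edgeCount_le (a ⊔ b)
  have h6 : edgeCount (a ⊓ b) ≤ n.choose 2 := edgeCount_le (a ⊓ b)
  simp only [W]
  rw [mul_mul_mul_comm, ← pow_add, ← pow_add, mul_mul_mul_comm, ← pow_add, ← pow_add, ← h1]
  congr 2
  omega

end Janson

section Janson2

variable {ι : Type*} [Fintype ι]

lemma indep' (p : ℝ) (K : SimpleGraph (Fin n)) (f : SimpleGraph (Fin n) → ℝ)
    (hf : ∀ G, f (G \ K) = f G) :
    ∑ G : SimpleGraph (Fin n), W n p G * (indic K G * f G)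
      = p ^ edgeCount K * ∑ G : SimpleGraph (Fin n), W n p G * f G := by
  simp only [indic]
  exact indep p K f hf

lemma sum_W_indic (p : ℝ) (K : SimpleGraph (Fin n)) :
    ∑ G : SimpleGraph (Fin n), W n p G * indic K G = p ^ edgeCount K := by
  have h := indep' p K (fun _ => 1) (fun _ => rfl)
  simp only [mul_one] at h
  rw [h, sum_W, mul_one]

lemma key_i (p : ℝ) (hp0 : 0 < p) (hp1 : p < 1) (H : ι → SimpleGraph (Fin n)) (i : ι)
    (t : ℝ) (ht : 0 ≤ t) :
    (p ^ edgeCount (H i) - t * (∑ G : SimpleGraph (Fin n), W n p G * (indic (H i) G * Yf H i G)))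
        * (∑ G : SimpleGraph (Fin n), W n p G * Real.exp (-(Xf H G) * t))
      ≤ ∑ G : SimpleGraph (Fin n), W n p G * (indic (H i) G * Real.exp (-(Xf H G) * t)) := by
  set pe := p ^ edgeCount (H i) with hpe
  have hpe0 : 0 < pe := pow_pos hp0 _
  set Qi := ∑ G : SimpleGraph (Fin n), W n p G * (indic (H i) G * Yf H i G) with hQi
  set ψ := ∑ G : SimpleGraph (Fin n), W n p G * Real.exp (-(Xf H G) * t) with hψ
  set T := ∑ G : SimpleGraph (Fin n), W n p G * Real.exp (-(Zf H i G) * t) with hT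
  set A := ∑ G : SimpleGraph (Fin n),
    W n p G * (indic (H i) G * Real.exp (-(Zf H i G) * t)) with hA
  set B := ∑ G : SimpleGraph (Fin n),
    W n p G * (indic (H i) G * (Yf H i G * Real.exp (-(Zf H i G) * t))) with hB
  have hWnn : ∀ G : SimpleGraph (Fin n), 0 ≤ W n p G := W_nonneg hp0.le hp1.le
  have hexpZ_le_one : ∀ G : SimpleGraph (Fin n), Real.exp (-(Zf H i G) * t) ≤ 1 := by
    intro G
    rw [← Real.exp_zero]
    apply Real.exp_le_exp.2
    have := Zf_nonneg H i G
    nlinarith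
  -- independence
  have hAT : A = pe * T := by
    rw [hA, hT, hpe]
    exact indep' p (H i) (fun G => Real.exp (-(Zf H i G) * t)) (fun G => by rw [Zf_sdiff])
  -- FKG
  have hfkg : Qi * (pe - A) ≤ pe * (Qi - B) := by
    have h := fkg (μ := fun G : SimpleGraph (Fin n) => W n p G * indic (H i) G)
      (f := Yf H i) (g := fun G => 1 - Real.exp (-(Zf H i G) * t))
      (fun G => mul_nonneg (hWnn G) (indic_nonneg _ _))
      (fun G => Yf_nonneg H i G)
      (fun G => by have := hexpZ_le_one G; dsimp; linarith)
      (Yf_mono H i)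
      (fun a b hab => by
        dsimp
        have hz : Zf H i a ≤ Zf H i b := Zf_mono H i hab
        have : Real.exp (-(Zf H i b) * t) ≤ Real.exp (-(Zf H i a) * t) := by
          apply Real.exp_le_exp.2
          nlinarith
        linarith)
      (fun a b => by
        rw [mul_mul_mul_comm, W_inf_sup, indic_inf_sup, mul_mul_mul_comm])
    have e1 : ∑ G : SimpleGraph (Fin n), W n p G * indic (H i) G = pe := sum_W_indic p (H i)
    have e2 : ∑ G : SimpleGraph (Fin n), (W n p G * indic (H i) G) * Yf H i G = Qi := by
      rw [hQi]; exact Finset.sum_congr rfl fun G _ => by ring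
    have e3 : ∑ G : SimpleGraph (Fin n),
        (W n p G * indic (H i) G) * (1 - Real.exp (-(Zf H i G) * t)) = pe - A := by
      rw [hA, ← e1, ← Finset.sum_sub_distrib]
      exact Finset.sum_congr rfl fun G _ => by ring
    have e4 : ∑ G : SimpleGraph (Fin n),
        (W n p G * indic (H i) G) * (Yf H i G * (1 - Real.exp (-(Zf H i G) * t)))
          = Qi - B := by
      rw [hB, hQi, ← Finset.sum_sub_distrib]
      exact Finset.sum_congr rfl fun G _ => by ring
    rw [e1, e2, e3, e4] at h
    exact h
  have hQi0 : 0 ≤ Qi := Finset.sum_nonneg fun G _ =>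
    mul_nonneg (hWnn G) (mul_nonneg (indic_nonneg _ _) (Yf_nonneg H i G))
  have hT0 : 0 ≤ T := Finset.sum_nonneg fun G _ => mul_nonneg (hWnn G) (Real.exp_pos _).le
  have hBT : B ≤ Qi * T := by
    have h2 : pe * B ≤ pe * (Qi * T) := by nlinarith [hfkg, hAT]
    exact le_of_mul_le_mul_left h2 hpe0
  have hψT : ψ ≤ T := by
    apply Finset.sum_le_sum
    intro G _
    apply mul_le_mul_of_nonneg_left _ (hWnn G)
    apply Real.exp_le_exp.2
    have := Zf_le_Xf H i G
    nlinarith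
  have hψ0 : 0 ≤ ψ := Finset.sum_nonneg fun G _ => mul_nonneg (hWnn G) (Real.exp_pos _).le
  have hEi : A - t * B ≤ ∑ G : SimpleGraph (Fin n),
      W n p G * (indic (H i) G * Real.exp (-(Xf H G) * t)) := by
    rw [hA, hB, Finset.mul_sum, ← Finset.sum_sub_distrib]
    apply Finset.sum_le_sum
    intro G _
    have hsplit : Real.exp (-(Xf H G) * t)
        = Real.exp (-(Yf H i G) * t) * Real.exp (-(Zf H i G) * t) := by
      rw [← Real.exp_add, Xf_eq_add H i G]
      ring_nf
    have hexpY : 1 - Yf H i G * t ≤ Real.exp (-(Yf H i G) * t) := by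
      have := Real.add_one_le_exp (-(Yf H i G) * t)
      linarith
    have hWi : 0 ≤ W n p G * indic (H i) G := mul_nonneg (hWnn G) (indic_nonneg _ _)
    have hexpZ0 : 0 < Real.exp (-(Zf H i G) * t) := Real.exp_pos _
    have key : (1 - Yf H i G * t) * Real.exp (-(Zf H i G) * t) ≤ Real.exp (-(Xf H G) * t) := by
      rw [hsplit]
      exact mul_le_mul_of_nonneg_right hexpY hexpZ0.le
    nlinarith [mul_le_mul_of_nonneg_left key hWi]
  have hEi0 : 0 ≤ ∑ G : SimpleGraph (Fin n),
      W n p G * (indic (H i) G * Real.exp (-(Xf H G) * t)) :=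
    Finset.sum_nonneg fun G _ => mul_nonneg (hWnn G)
      (mul_nonneg (indic_nonneg _ _) (Real.exp_pos _).le)
  rcases le_or_gt 0 (pe - t * Qi) with hcase | hcase
  · calc (pe - t * Qi) * ψ ≤ (pe - t * Qi) * T := mul_le_mul_of_nonneg_left hψT hcase
    _ = pe * T - t * (Qi * T) := by ring
    _ ≤ A - t * B := by
        rw [hAT]
        have := mul_le_mul_of_nonneg_left hBT ht
        linarith
    _ ≤ _ := hEi
  · calc (pe - t * Qi) * ψ ≤ 0 := mul_nonpos_of_nonpos_of_nonneg hcase.le hψ0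
    _ ≤ _ := hEi0

end Janson2

section Janson3

variable {ι : Type*} [Fintype ι]

lemma indic_mul (a b G : SimpleGraph (Fin n)) :
    indic a G * indic b G = indic (a ⊔ b) G := by
  simp only [indic, sup_le_iff]
  by_cases ha : a ≤ G <;> by_cases hb : b ≤ G <;> simp [ha, hb]

lemma edgeCount_sup_eq (a b : SimpleGraph (Fin n)) :
    edgeCount (a ⊔ b) = edgeCount a + edgeCount b - edgeCount (a ⊓ b) := by
  have h := edgeCount_inf_add_sup a b
  omega

lemma Qi_eq (p : ℝ) (H : ι → SimpleGraph (Fin n)) (i : ι) :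
    ∑ G : SimpleGraph (Fin n), W n p G * (indic (H i) G * Yf H i G)
      = ∑ j : ι, if (H i ⊓ H j).edgeSet.Nonempty then p ^ edgeCount (H i ⊔ H j) else 0 := by
  have h1 : ∀ G : SimpleGraph (Fin n), W n p G * (indic (H i) G * Yf H i G)
      = ∑ j : ι, if (H i ⊓ H j).edgeSet.Nonempty
          then W n p G * indic (H i ⊔ H j) G else 0 := by
    intro G
    rw [Yf, Finset.mul_sum, Finset.mul_sum]
    refine Finset.sum_congr rfl fun j _ => ?_
    by_cases hc : (H i ⊓ H j).edgeSet.Nonempty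
    · rw [if_pos hc, if_pos hc, ← indic_mul]
    · rw [if_neg hc, if_neg hc]
      ring
  rw [Finset.sum_congr rfl fun G _ => h1 G, Finset.sum_comm]
  refine Finset.sum_congr rfl fun j _ => ?_
  by_cases hc : (H i ⊓ H j).edgeSet.Nonempty
  · simp only [if_pos hc]
    exact sum_W_indic p _
  · simp only [if_neg hc, Finset.sum_const_zero]

lemma sum_Q_le (p : ℝ) (hp0 : 0 < p) (H : ι → SimpleGraph (Fin n)) :
    ∑ i : ι, ∑ G : SimpleGraph (Fin n), W n p G * (indic (H i) G * Yf H i G)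
      ≤ (∑ i : ι, p ^ edgeCount (H i)) +
        ∑ i : ι, ∑ j : ι, (if i ≠ j ∧ (H i ⊓ H j).edgeSet.Nonempty then
          p ^ (edgeCount (H i) + edgeCount (H j) - edgeCount (H i ⊓ H j)) else 0) := by
  rw [← Finset.sum_add_distrib]
  refine Finset.sum_le_sum fun i _ => ?_
  rw [Qi_eq p H i]
  have hpt : ∀ j : ι, (if (H i ⊓ H j).edgeSet.Nonempty then p ^ edgeCount (H i ⊔ H j) else 0)
      ≤ (if j = i then p ^ edgeCount (H i) else 0)
        + (if i ≠ j ∧ (H i ⊓ H j).edgeSet.Nonempty then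
            p ^ (edgeCount (H i) + edgeCount (H j) - edgeCount (H i ⊓ H j)) else 0) := by
    intro j
    by_cases hji : j = i
    · subst hji
      have hrhs : ((if j = j then p ^ edgeCount (H j) else 0)
          + (if j ≠ j ∧ (H j ⊓ H j).edgeSet.Nonempty then
              p ^ (edgeCount (H j) + edgeCount (H j) - edgeCount (H j ⊓ H j)) else 0))
          = p ^ edgeCount (H j) := by simp
      rw [hrhs]
      by_cases hc : (H j ⊓ H j).edgeSet.Nonempty
      · rw [if_pos hc, sup_idem]
      · rw [if_neg hc]
        exact (pow_pos hp0 _).le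
    · rw [if_neg hji, zero_add]
      by_cases hc : (H i ⊓ H j).edgeSet.Nonempty
      · rw [if_pos hc, if_pos ⟨fun h => hji h.symm, hc⟩, edgeCount_sup_eq]
      · rw [if_neg hc, if_neg (fun h => hc h.2)]
  calc ∑ j : ι, (if (H i ⊓ H j).edgeSet.Nonempty then p ^ edgeCount (H i ⊔ H j) else 0)
      ≤ ∑ j : ι, ((if j = i then p ^ edgeCount (H i) else 0)
        + (if i ≠ j ∧ (H i ⊓ H j).edgeSet.Nonempty then
            p ^ (edgeCount (H i) + edgeCount (H j) - edgeCount (H i ⊓ H j)) else 0)) :=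
        Finset.sum_le_sum fun j _ => hpt j
    _ = _ := by
        rw [Finset.sum_add_distrib,
          Finset.sum_ite_eq' Finset.univ i (fun _ => p ^ edgeCount (H i))]
        simp

lemma D_ge (p : ℝ) (hp0 : 0 < p) (hp1 : p < 1) (H : ι → SimpleGraph (Fin n))
    (μ δ : ℝ)
    (hμ : μ = ∑ i : ι, p ^ edgeCount (H i))
    (hδ : δ = ∑ i : ι, ∑ j : ι,
      if i ≠ j ∧ (H i ⊓ H j).edgeSet.Nonempty then
        p ^ (edgeCount (H i) + edgeCount (H j) - edgeCount (H i ⊓ H j))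
      else 0)
    (t : ℝ) (ht : 0 ≤ t) :
    (μ - t * (μ + δ)) * (∑ G : SimpleGraph (Fin n), W n p G * Real.exp (-(Xf H G) * t))
      ≤ ∑ G : SimpleGraph (Fin n), W n p G * (Xf H G * Real.exp (-(Xf H G) * t)) := by
  set ψ := ∑ G : SimpleGraph (Fin n), W n p G * Real.exp (-(Xf H G) * t) with hψ
  have hψ0 : 0 ≤ ψ := Finset.sum_nonneg fun G _ =>
    mul_nonneg (W_nonneg hp0.le hp1.le G) (Real.exp_pos _).le
  have hD : ∑ G : SimpleGraph (Fin n), W n p G * (Xf H G * Real.exp (-(Xf H G) * t))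
      = ∑ i : ι, ∑ G : SimpleGraph (Fin n),
          W n p G * (indic (H i) G * Real.exp (-(Xf H G) * t)) := by
    rw [Finset.sum_comm]
    refine Finset.sum_congr rfl fun G _ => ?_
    rw [Xf, Finset.sum_mul, Finset.mul_sum]
  rw [hD]
  have hkey := fun i : ι => key_i p hp0 hp1 H i t ht
  have hsum : ∑ i : ι, ((p ^ edgeCount (H i)
        - t * (∑ G : SimpleGraph (Fin n), W n p G * (indic (H i) G * Yf H i G))) * ψ)
      ≤ ∑ i : ι, ∑ G : SimpleGraph (Fin n),
          W n p G * (indic (H i) G * Real.exp (-(Xf H G) * t)) :=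
    Finset.sum_le_sum fun i _ => hkey i
  refine le_trans ?_ hsum
  rw [← Finset.sum_mul]
  apply mul_le_mul_of_nonneg_right _ hψ0
  rw [Finset.sum_sub_distrib, ← Finset.mul_sum]
  have hQ := sum_Q_le p hp0 H
  rw [← hμ, ← hδ] at hQ
  have h2 : t * (∑ i : ι, ∑ G : SimpleGraph (Fin n), W n p G * (indic (H i) G * Yf H i G))
      ≤ t * (μ + δ) := mul_le_mul_of_nonneg_left hQ ht
  rw [← hμ]
  linarith

end Janson3

section Janson4

variable {ι : Type*} [Fintype ι]

lemma psi_le (p : ℝ) (hp0 : 0 < p) (hp1 : p < 1) (H : ι → SimpleGraph (Fin n))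
    (μ δ : ℝ)
    (hμ : μ = ∑ i : ι, p ^ edgeCount (H i))
    (hδ : δ = ∑ i : ι, ∑ j : ι,
      if i ≠ j ∧ (H i ⊓ H j).edgeSet.Nonempty then
        p ^ (edgeCount (H i) + edgeCount (H j) - edgeCount (H i ⊓ H j))
      else 0)
    (t : ℝ) (ht : 0 ≤ t) :
    ∑ G : SimpleGraph (Fin n), W n p G * Real.exp (-(Xf H G) * t)
      ≤ Real.exp ((μ + δ) / 2 * t ^ 2 - μ * t) := by
  haveI : Nonempty (SimpleGraph (Fin n)) := ⟨⊥⟩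
  set ψ : ℝ → ℝ := fun s => ∑ G : SimpleGraph (Fin n), W n p G * Real.exp (-(Xf H G) * s)
    with hψdef
  set D : ℝ → ℝ := fun s => ∑ G : SimpleGraph (Fin n),
    W n p G * (Xf H G * Real.exp (-(Xf H G) * s)) with hDdef
  have hψpos : ∀ s, 0 < ψ s := fun s => Finset.sum_pos
    (fun G _ => mul_pos (W_pos hp0 hp1 G) (Real.exp_pos _)) Finset.univ_nonempty
  have hderiv : ∀ s, HasDerivAt ψ (-(D s)) s := by
    intro s
    have h1 : HasDerivAt ψ
        (∑ G : SimpleGraph (Fin n), W n p G * (Real.exp (-(Xf H G) * s) * -(Xf H G))) s := by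
      apply HasDerivAt.fun_sum
      intro G _
      simpa using (((hasDerivAt_id s).const_mul (-(Xf H G))).exp).const_mul (W n p G)
    have h2 : (∑ G : SimpleGraph (Fin n), W n p G * (Real.exp (-(Xf H G) * s) * -(Xf H G)))
        = -(D s) := by
      rw [hDdef, ← Finset.sum_neg_distrib]
      exact Finset.sum_congr rfl fun G _ => by ring
    rw [h2] at h1
    exact h1
  set F : ℝ → ℝ := fun s => Real.log (ψ s) + μ * s - (μ + δ) / 2 * s ^ 2 with hFdef
  have hFderiv : ∀ s, HasDerivAt F (-(D s) / ψ s + μ - (μ + δ) / 2 * (2 * s ^ 1)) s := by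
    intro s
    have hlog : HasDerivAt (fun s => Real.log (ψ s)) (-(D s) / ψ s) s :=
      (hderiv s).log (hψpos s).ne'
    have hlin : HasDerivAt (fun s : ℝ => μ * s) μ s := by
      simpa using (hasDerivAt_id s).const_mul μ
    have hquad : HasDerivAt (fun s : ℝ => (μ + δ) / 2 * s ^ 2) ((μ + δ) / 2 * (2 * s ^ 1)) s :=
      (hasDerivAt_pow 2 s).const_mul ((μ + δ) / 2)
    exact (hlog.add hlin).sub hquad
  have hanti : AntitoneOn F (Set.Ici (0 : ℝ)) := by
    apply antitoneOn_of_deriv_nonpos (convex_Ici (0 : ℝ))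
    · exact fun x _ => (hFderiv x).continuousAt.continuousWithinAt
    · exact fun x _ => (hFderiv x).differentiableAt.differentiableWithinAt
    · intro x hx
      rw [interior_Ici] at hx
      rw [(hFderiv x).deriv]
      have hode := D_ge p hp0 hp1 H μ δ hμ hδ x (le_of_lt hx)
      have hψx := hψpos x
      have h1 : -(D x) / ψ x ≤ -(μ - x * (μ + δ)) := by
        rw [div_le_iff₀ hψx]
        nlinarith
      have h2 : (μ + δ) / 2 * (2 * x ^ 1) = (μ + δ) * x := by ring
      rw [h2]
      linarith
  have hF0 : F 0 = 0 := by
    have hψ0 : ψ 0 = 1 := by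
      rw [hψdef]
      simp only [mul_zero, Real.exp_zero, mul_one]
      exact sum_W p
    rw [hFdef]
    simp [hψ0]
  have hFt : F t ≤ 0 := by
    rw [← hF0]
    exact hanti (Set.mem_Ici.2 le_rfl) (Set.mem_Ici.2 ht) ht
  have hlog : Real.log (ψ t) ≤ (μ + δ) / 2 * t ^ 2 - μ * t := by
    rw [hFdef] at hFt
    dsimp at hFt
    linarith
  calc ψ t = Real.exp (Real.log (ψ t)) := (Real.exp_log (hψpos t)).symm
    _ ≤ _ := Real.exp_le_exp.2 hlog

end Janson4


/-- The probability that the binomial random graph `G(n,p)` satisfies the property `P`. -/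
noncomputable def gnpProb (n : ℕ) (p : ℝ) (P : SimpleGraph (Fin n) → Prop) : ℝ :=
  ∑ G : SimpleGraph (Fin n),
    if P G then p ^ edgeCount G * (1 - p) ^ (n.choose 2 - edgeCount G) else 0

/-- Janson's inequality, graph version.  `H i`, for `i` in a finite index type `ι`, is a family
of (spanning) subgraphs of the complete graph on vertex set `Fin n`; the event `H i ⊆ G` is
`H i ≤ G`, and `H i ⊓ H j` is the graph whose edge set is `E(H i) ∩ E(H j)`. -/
theorem janson_inequality (n : ℕ) (p : ℝ) (hp : p ∈ Set.Ioo (0 : ℝ) 1)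
    {ι : Type*} [Fintype ι] (H : ι → SimpleGraph (Fin n))
    (μ δ : ℝ)
    (hμ : μ = ∑ i : ι, p ^ edgeCount (H i))
    (hδ : δ = ∑ i : ι, ∑ j : ι,
      if i ≠ j ∧ (H i ⊓ H j).edgeSet.Nonempty then
        p ^ (edgeCount (H i) + edgeCount (H j) - edgeCount (H i ⊓ H j))
      else 0)
    (γ : ℝ) (hγ : 0 < γ) (hγ1 : γ < 1) :
    gnpProb n p (fun G => (∑ i : ι, if H i ≤ G then (1 : ℝ) else 0) < (1 - γ) * μ) ≤
      Real.exp (-(γ ^ 2 * μ ^ 2) / (2 * (μ + δ))) := by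
  
  obtain ⟨hp0, hp1⟩ := hp
  rcases isEmpty_or_nonempty ι with hemp | hne
  · have hμ0 : μ = 0 := by rw [hμ]; simp
    rw [gnpProb, Finset.sum_eq_zero]
    · exact (Real.exp_pos _).le
    intro G _
    rw [if_neg]
    simp [hμ0]
  · have hμpos : 0 < μ := by
      rw [hμ]
      exact Finset.sum_pos (fun i _ => pow_pos hp0 _) Finset.univ_nonempty
    have hδ0 : 0 ≤ δ := by
      rw [hδ]
      refine Finset.sum_nonneg fun i _ => Finset.sum_nonneg fun j _ => ?_
      split
      · positivity
      · exact le_rfl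
    have hμδ : 0 < μ + δ := by linarith
    set t := γ * μ / (μ + δ) with htdef
    have ht0 : 0 ≤ t := by positivity
    set c := (1 - γ) * μ with hcdef
    have hXf : ∀ G : SimpleGraph (Fin n),
        (∑ i : ι, if H i ≤ G then (1 : ℝ) else 0) = Xf H G := fun G => rfl
    -- Markov step
    have hmarkov : gnpProb n p (fun G => (∑ i : ι, if H i ≤ G then (1 : ℝ) else 0) < c)
        ≤ Real.exp (t * c) * ∑ G : SimpleGraph (Fin n), W n p G * Real.exp (-(Xf H G) * t) := by
      rw [gnpProb, Finset.mul_sum]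
      apply Finset.sum_le_sum
      intro G _
      have hWnn := W_nonneg hp0.le hp1.le G
      by_cases hPG : (∑ i : ι, if H i ≤ G then (1 : ℝ) else 0) < c
      · rw [if_pos hPG]
        rw [hXf G] at hPG
        have h1 : t * Xf H G ≤ t * c := mul_le_mul_of_nonneg_left hPG.le ht0
        have h2 : (1 : ℝ) ≤ Real.exp (t * c) * Real.exp (-(Xf H G) * t) := by
          rw [← Real.exp_add, ← Real.exp_zero]
          apply Real.exp_le_exp.2
          nlinarith
        calc p ^ edgeCount G * (1 - p) ^ (n.choose 2 - edgeCount G)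
            = W n p G * 1 := (mul_one _).symm
          _ ≤ W n p G * (Real.exp (t * c) * Real.exp (-(Xf H G) * t)) :=
              mul_le_mul_of_nonneg_left h2 hWnn
          _ = Real.exp (t * c) * (W n p G * Real.exp (-(Xf H G) * t)) := by ring
      · rw [if_neg hPG]
        positivity
    have hpsi := psi_le p hp0 hp1 H μ δ hμ hδ t ht0
    have hexp_eq : t * c + ((μ + δ) / 2 * t ^ 2 - μ * t) = -(γ ^ 2 * μ ^ 2) / (2 * (μ + δ)) := by
      rw [htdef, hcdef]
      field_simp
      ring
    calc gnpProb n p (fun G => (∑ i : ι, if H i ≤ G then (1 : ℝ) else 0) < (1 - γ) * μ)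
        ≤ Real.exp (t * c) * ∑ G : SimpleGraph (Fin n), W n p G * Real.exp (-(Xf H G) * t) :=
          hmarkov
      _ ≤ Real.exp (t * c) * Real.exp ((μ + δ) / 2 * t ^ 2 - μ * t) :=
          mul_le_mul_of_nonneg_left hpsi (Real.exp_pos _).le
      _ = Real.exp (t * c + ((μ + δ) / 2 * t ^ 2 - μ * t)) := (Real.exp_add _ _).symm
      _ = Real.exp (-(γ ^ 2 * μ ^ 2) / (2 * (μ + δ))) := by rw [hexp_eq]
end

section
/- Let r ≥ 1 be an integer and let H be a graph in which every connected component has at least r vertices. If I ⊆ V(H) is a set of vertices such that any two distinct vertices of I are at graph distance at least 2r + 1 in H (i.e., I is 2r-independent), then |I| ≤ v(H)/r. -/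
open Finset

private lemma walk_getVert_le {β : Type*} {H : SimpleGraph β} {u v : β} (p : H.Walk u v)
    (i : ℕ) : ∃ q : H.Walk u (p.getVert i), q.length ≤ i := by
  induction p generalizing i with
  | nil => exact ⟨SimpleGraph.Walk.nil.copy rfl (by simp [SimpleGraph.Walk.getVert]), by simp⟩
  | @cons a b c h q ih =>
    cases i with
    | zero => exact ⟨SimpleGraph.Walk.nil.copy rfl (by simp [SimpleGraph.Walk.getVert]), by
        exact (SimpleGraph.Walk.length_copy _ _ _).le⟩
    | succ i =>
      obtain ⟨q', hq'⟩ := ih i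
      exact ⟨SimpleGraph.Walk.cons h q', by simpa using hq'⟩

private lemma dist_getVert_eq {β : Type*} {H : SimpleGraph β} {v w : β} (p : H.Walk v w)
    (hp : p.length = H.dist v w) (j : ℕ) (hj : j ≤ p.length) :
    H.dist v (p.getVert j) = j := by
  obtain ⟨q, hq⟩ := walk_getVert_le p j
  have hle : H.dist v (p.getVert j) ≤ j := le_trans (H.dist_le q) hq
  -- lower bound
  obtain ⟨q0, hq0⟩ := walk_getVert_le p.reverse (p.length - j)
  have hgv : p.reverse.getVert (p.length - j) = p.getVert j := by
    rw [SimpleGraph.Walk.getVert_reverse, Nat.sub_sub_self hj]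
  let q' : H.Walk w (p.getVert j) := q0.copy rfl hgv
  have hq' : q'.length ≤ p.length - j := by
    simpa [q', SimpleGraph.Walk.length_copy] using hq0
  obtain ⟨s, hs⟩ := (q.reachable).exists_walk_length_eq_dist
  have := H.dist_le (s.append q'.reverse)
  rw [SimpleGraph.Walk.length_append, SimpleGraph.Walk.length_reverse, hs] at this
  have hlr : p.reverse.length = p.length := SimpleGraph.Walk.length_reverse p
  omega

/-- If every connected component of `H` has at least `r` vertices and `I` is a
`2r`-independent set (any two distinct vertices of `I` are at graph distance at least
`2r + 1`), then `|I| ≤ v(H) / r`. -/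
theorem independent_set_bound
    (r : ℕ) (hr : 1 ≤ r) {β : Type*} [Fintype β] (H : SimpleGraph β)
    (hcomp : ∀ v : β, r ≤ Nat.card {w : β | H.Reachable v w})
    (I : Finset β)
    (hI : ∀ u ∈ I, ∀ v ∈ I, u ≠ v → ∀ w : H.Walk u v, 2 * r + 1 ≤ w.length) :
    (I.card : ℝ) ≤ (Fintype.card β : ℝ) / (r : ℝ) := by
  classical
  set B : β → Finset β := fun v => univ.filter (fun w => H.Reachable v w ∧ H.dist v w ≤ r - 1)
    with hB
  -- each ball has at least r vertices
  have hball : ∀ v : β, r ≤ (B v).card := by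
    intro v
    by_cases hcase : ∀ w : β, H.Reachable v w → H.dist v w ≤ r - 1
    · have hsub : {w : β | H.Reachable v w}.toFinset ⊆ B v := by
        intro w hw
        simp only [Set.mem_toFinset, Set.mem_setOf_eq] at hw
        simp only [hB, mem_filter, mem_univ, true_and]
        exact ⟨hw, hcase w hw⟩
      calc r ≤ Nat.card {w : β | H.Reachable v w} := hcomp v
        _ = {w : β | H.Reachable v w}.toFinset.card := by
            rw [Nat.card_eq_card_toFinset]
        _ ≤ (B v).card := Finset.card_le_card hsub
    · push_neg at hcase
      obtain ⟨w, hwr, hwd⟩ := hcase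
      obtain ⟨p, hp⟩ := hwr.exists_walk_length_eq_dist
      have hlen : r ≤ p.length := by omega
      have : (Finset.range r).card ≤ (B v).card := by
        apply Finset.card_le_card_of_injOn (fun j => p.getVert j)
        · intro j hj
          simp only [Finset.mem_coe, Finset.mem_range] at hj
          have hd : H.dist v (p.getVert j) = j := dist_getVert_eq p hp j (by omega)
          simp only [Finset.mem_coe, hB, mem_filter, mem_univ, true_and]
          refine ⟨?_, by omega⟩
          obtain ⟨q, _⟩ := walk_getVert_le p j
          exact q.reachable
        · intro a ha b hb hab
          simp only [Finset.mem_coe, Finset.mem_range] at ha hb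
          have hda := dist_getVert_eq p hp a (by omega)
          have hdb := dist_getVert_eq p hp b (by omega)
          have hab' : p.getVert a = p.getVert b := hab
          rw [hab'] at hda
          omega
      simpa using this
  -- balls are pairwise disjoint
  have hdisj : (I : Set β).PairwiseDisjoint B := by
    intro u hu v hv huv
    simp only [Finset.disjoint_left]
    intro w hwu hwv
    simp only [hB, mem_filter, mem_univ, true_and] at hwu hwv
    obtain ⟨p1, hp1⟩ := hwu.1.exists_walk_length_eq_dist
    obtain ⟨p2, hp2⟩ := hwv.1.exists_walk_length_eq_dist
    have := hI u hu v hv huv (p1.append p2.reverse)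
    rw [SimpleGraph.Walk.length_append, SimpleGraph.Walk.length_reverse, hp1, hp2] at this
    omega
  -- counting
  have hcount : I.card * r ≤ Fintype.card β := by
    calc I.card * r = ∑ _u ∈ I, r := by rw [Finset.sum_const, smul_eq_mul]
      _ ≤ ∑ u ∈ I, (B u).card := Finset.sum_le_sum (fun u _ => hball u)
      _ = (I.biUnion B).card := (Finset.card_biUnion (fun u hu v hv huv =>
            hdisj hu hv huv)).symm
      _ ≤ Fintype.card β := by
          simpa using Finset.card_le_card (Finset.subset_univ (I.biUnion B))
  rw [le_div_iff₀ (by positivity)]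
  exact_mod_cast hcount
end

section
/- Let Δ ≥ 2 and q ≥ 1 be integers, let ε > 0, and let H be a graph on m vertices with maximum degree at most Δ. Suppose that H has at least ⌊εm⌋ isolated vertices and that every vertex of H is at graph distance at most q − 1 from some vertex of degree at most Δ − 1. Then H belongs to the family F(m, (Δ² + 1)q + 1, ε, Δ − 1). -/
open Finset

/-- `H` has maximum degree at most `Δ`. -/
def maxDegLE {β : Type*} (H : SimpleGraph β) (Δ : ℕ) : Prop :=
  ∀ v, Nat.card (H.neighborSet v) ≤ Δ

/-- `S` is a `k`-independent set in `H`: every two distinct vertices of `S` are at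
graph distance at least `k + 1`. -/
def kIndepSet {β : Type*} (H : SimpleGraph β) (k : ℕ) (S : Set β) : Prop :=
  ∀ u ∈ S, ∀ v ∈ S, u ≠ v → ∀ w : H.Walk u v, k + 1 ≤ w.length

/-- Membership in the family `𝓕(n, t, ε, d)`: there is a partition
`W 0, W 1, …, W t` of the vertex set (parts may be empty) with
(i) `|W t| = ⌊ε n⌋`, (ii) `W 0` is the external neighborhood of `W t`,
(iii) `W t` is 3-independent, (iv) `W i` is 2-independent for `1 ≤ i ≤ t - 1`, and
(v) for `1 ≤ i ≤ t`, each `w ∈ W i` has at most `d` neighbors in `W 0 ∪ ⋯ ∪ W (i-1)`. -/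
def inFamilyF (n t d : ℕ) (ε : ℝ) (H : SimpleGraph (Fin n)) : Prop :=
  ∃ W : ℕ → Set (Fin n),
    (∀ i ≤ t, ∀ j ≤ t, i ≠ j → Disjoint (W i) (W j)) ∧
    (⋃ i ∈ Finset.range (t + 1), W i) = Set.univ ∧
    Nat.card (W t) = ⌊ε * n⌋₊ ∧
    W 0 = {v | v ∉ W t ∧ ∃ u ∈ W t, H.Adj u v} ∧
    kIndepSet H 3 (W t) ∧
    (∀ i, 1 ≤ i → i ≤ t - 1 → kIndepSet H 2 (W i)) ∧
    (∀ i, 1 ≤ i → i ≤ t → ∀ w ∈ W i,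
      Nat.card {v | H.Adj w v ∧ ∃ j < i, v ∈ W j} ≤ d)

lemma greedy_coloring (D : ℕ) : ∀ (m : ℕ) (G : SimpleGraph (Fin m)),
    (∀ v, {u | G.Adj v u}.ncard ≤ D) →
    ∃ c : Fin m → Fin (D + 1), ∀ u v, G.Adj u v → c u ≠ c v := by
  intro m
  induction m with
  | zero => intro G _; exact ⟨Fin.elim0, fun u => u.elim0⟩
  | succ m ih =>
    intro G hG
    classical
    set G' : SimpleGraph (Fin m) := SimpleGraph.comap Fin.castSucc G with hG'
    have hbound : ∀ v, {u | G'.Adj v u}.ncard ≤ D := by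
      intro v
      have himg : (Fin.castSucc '' {u | G'.Adj v u}) ⊆ {u | G.Adj (Fin.castSucc v) u} := by
        rintro x ⟨u, hu, rfl⟩; exact hu
      calc {u | G'.Adj v u}.ncard
          = (Fin.castSucc '' {u | G'.Adj v u}).ncard :=
            (Set.ncard_image_of_injective _ (Fin.castSucc_injective m)).symm
        _ ≤ {u | G.Adj (Fin.castSucc v) u}.ncard :=
            Set.ncard_le_ncard himg (Set.toFinite _)
        _ ≤ D := hG _
    obtain ⟨c', hc'⟩ := ih G' hbound
    -- forbidden colors at the last vertex
    set F : Finset (Fin (D + 1)) :=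
      (Finset.univ.filter fun u : Fin m => G.Adj (Fin.castSucc u) (Fin.last m)).image c' with hF
    have hFcard : F.card < D + 1 := by
      have h1 : F.card ≤ (Finset.univ.filter fun u : Fin m =>
          G.Adj (Fin.castSucc u) (Fin.last m)).card := Finset.card_image_le
      have h2 : (Finset.univ.filter fun u : Fin m =>
          G.Adj (Fin.castSucc u) (Fin.last m)).card ≤ {u | G.Adj (Fin.last m) u}.ncard := by
        rw [Set.ncard_eq_toFinset_card']
        apply Finset.card_le_card_of_injOn (fun u => Fin.castSucc u)
        · intro u hu
          simp only [Finset.mem_coe, Finset.mem_filter] at hu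
          simp [hu.2.symm]
        · intro a _ b _ hab; exact Fin.castSucc_injective m hab
      have := hG (Fin.last m)
      omega
    have hfree : ∃ x : Fin (D + 1), x ∉ F := by
      by_contra h
      push_neg at h
      have : (Finset.univ : Finset (Fin (D + 1))).card ≤ F.card :=
        Finset.card_le_card (fun x _ => h x)
      simp at this
      omega
    obtain ⟨x, hx⟩ := hfree
    refine ⟨fun v => if h : v = Fin.last m then x else c' (v.castPred h), ?_⟩
    intro u v huv
    by_cases hu : u = Fin.last m <;> by_cases hv : v = Fin.last m
    · exact absurd (hu ▸ hv ▸ huv) (G.irrefl)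
    · simp only [dif_pos hu, dif_neg hv]
      intro heq
      apply hx
      rw [hF, heq]
      apply Finset.mem_image_of_mem
      simp only [Finset.mem_filter, Finset.mem_univ, true_and, Fin.castSucc_castPred]
      exact hu ▸ huv.symm
    · simp only [dif_neg hu, dif_pos hv]
      intro heq
      apply hx
      rw [hF, ← heq]
      apply Finset.mem_image_of_mem
      simp only [Finset.mem_filter, Finset.mem_univ, true_and, Fin.castSucc_castPred]
      exact hv ▸ huv
    · simp only [dif_neg hu, dif_neg hv]
      apply hc'
      show G.Adj (Fin.castSucc _) (Fin.castSucc _)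
      rwa [Fin.castSucc_castPred, Fin.castSucc_castPred]


/-- The square of a graph: adjacency means distance 1 or 2. -/
def squareGraph {β : Type*} (H : SimpleGraph β) : SimpleGraph β where
  Adj u v := u ≠ v ∧ (H.Adj u v ∨ ∃ x, H.Adj u x ∧ H.Adj x v)
  symm := ⟨by
    rintro u v ⟨h1, h2⟩
    refine ⟨h1.symm, ?_⟩
    rcases h2 with h | ⟨x, hx1, hx2⟩
    · exact Or.inl h.symm
    · exact Or.inr ⟨x, hx2.symm, hx1.symm⟩⟩
  loopless := ⟨fun v h => h.1 rfl⟩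

lemma squareGraph_ncard_le {m Δ : ℕ} (H : SimpleGraph (Fin m))
    (hdeg : ∀ v, Nat.card (H.neighborSet v) ≤ Δ) (v : Fin m) :
    {u | (squareGraph H).Adj v u}.ncard ≤ Δ ^ 2 := by
  classical
  set nb : Fin m → Finset (Fin m) := fun w => Set.toFinset {x | H.Adj w x} with hnb
  have hnbmem : ∀ w x, x ∈ nb w ↔ H.Adj w x := by
    intro w x; simp [hnb]
  have hnbcard : ∀ w, (nb w).card ≤ Δ := by
    intro w
    have := hdeg w
    rwa [Nat.card_coe_set_eq, SimpleGraph.neighborSet, Set.ncard_eq_toFinset_card'] at this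
  set T : Finset (Fin m) := (nb v).biUnion (fun w => (nb w ∪ {w}).erase v) with hT
  have hsub : {u | (squareGraph H).Adj v u} ⊆ ↑T := by
    rintro u ⟨hne, h | ⟨x, hx1, hx2⟩⟩
    · simp only [hT, Finset.coe_biUnion, Set.mem_iUnion]
      refine ⟨u, by simpa [hnbmem] using h, ?_⟩
      simp [Finset.mem_erase, Ne.symm hne]
    · simp only [hT, Finset.coe_biUnion, Set.mem_iUnion]
      refine ⟨x, by simpa [hnbmem] using hx1, ?_⟩
      simp [Finset.mem_erase, Ne.symm hne, hnbmem, hx2]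
  have hTcard : T.card ≤ Δ * Δ := by
    calc T.card ≤ ∑ w ∈ nb v, ((nb w ∪ {w}).erase v).card := Finset.card_biUnion_le
      _ ≤ ∑ _w ∈ nb v, Δ := by
        apply Finset.sum_le_sum
        intro w hw
        have hvmem : v ∈ nb w ∪ {w} := by
          simp [Finset.mem_union, hnbmem, ((hnbmem v w).mp hw).symm]
        rw [Finset.card_erase_of_mem hvmem]
        have h1 : (nb w ∪ {w}).card ≤ (nb w).card + 1 := by
          simpa using Finset.card_union_le (nb w) {w}
        have h2 := hnbcard w
        omega
      _ = (nb v).card * Δ := by rw [Finset.sum_const, smul_eq_mul]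
      _ ≤ Δ * Δ := Nat.mul_le_mul_right _ (hnbcard v)
  calc {u | (squareGraph H).Adj v u}.ncard ≤ (↑T : Set (Fin m)).ncard :=
        Set.ncard_le_ncard hsub (Set.toFinite _)
    _ = T.card := Set.ncard_coe_finset T
    _ ≤ Δ ^ 2 := by rw [pow_two]; exact hTcard

/-- A graph on `m` vertices with maximum degree at most `Δ`, at least `⌊ε m⌋` isolated
vertices, in which every vertex is within distance `q - 1` of a vertex of degree at most
`Δ - 1`, belongs to the family `𝓕(m, (Δ² + 1) q + 1, ε, Δ - 1)`. -/
theorem partition_into_familyF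
    (Δ q m : ℕ) (hΔ : 2 ≤ Δ) (hq : 1 ≤ q) (ε : ℝ) (hε : 0 < ε)
    (H : SimpleGraph (Fin m)) (hdeg : maxDegLE H Δ)
    (hiso : ⌊ε * m⌋₊ ≤ Nat.card {v : Fin m | ∀ w, ¬ H.Adj v w})
    (hnear : ∀ v : Fin m, ∃ w : Fin m,
      (∃ pth : H.Walk v w, pth.length ≤ q - 1) ∧ Nat.card (H.neighborSet w) ≤ Δ - 1) :
    inFamilyF m ((Δ ^ 2 + 1) * q + 1) (Δ - 1) ε H := by
  classical
  set t : ℕ := (Δ ^ 2 + 1) * q + 1 with ht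
  have ht1 : 1 ≤ t := by omega
  -- a coloring of the square graph
  obtain ⟨c, hc⟩ := greedy_coloring (Δ ^ 2) m (squareGraph H)
    (fun v => squareGraph_ncard_le H hdeg v)
  -- distance to the set of low-degree vertices
  have hP : ∀ v : Fin m, ∃ n : ℕ, ∃ w : Fin m,
      (∃ p : H.Walk v w, p.length = n) ∧ Nat.card (H.neighborSet w) ≤ Δ - 1 := by
    intro v
    obtain ⟨w, ⟨p, _⟩, hw⟩ := hnear v
    exact ⟨p.length, w, ⟨p, rfl⟩, hw⟩
  set d : Fin m → ℕ := fun v => Nat.find (hP v) with hd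
  have hdspec : ∀ v : Fin m, ∃ w : Fin m,
      (∃ p : H.Walk v w, p.length = d v) ∧ Nat.card (H.neighborSet w) ≤ Δ - 1 :=
    fun v => Nat.find_spec (hP v)
  have hdle : ∀ v, d v ≤ q - 1 := by
    intro v
    obtain ⟨w, ⟨p, hp⟩, hw⟩ := hnear v
    exact le_trans (Nat.find_min' (hP v) ⟨w, ⟨p, rfl⟩, hw⟩) hp
  have hzero : ∀ v, d v = 0 → Nat.card (H.neighborSet v) ≤ Δ - 1 := by
    intro v h0
    obtain ⟨w, ⟨p, hp⟩, hw⟩ := hdspec v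
    rw [h0] at hp
    exact (SimpleGraph.Walk.eq_of_length_eq_zero hp) ▸ hw
  have hstep : ∀ v, 1 ≤ d v → ∃ u, H.Adj v u ∧ d u < d v := by
    intro v h1
    obtain ⟨w, ⟨p, hp⟩, hw⟩ := hdspec v
    cases p with
    | nil => simp at hp; omega
    | cons h p' =>
      refine ⟨_, h, ?_⟩
      have hle : d _ ≤ p'.length := Nat.find_min' _ ⟨w, ⟨p', rfl⟩, hw⟩
      simp only [SimpleGraph.Walk.length_cons] at hp
      omega
  -- the index function
  set idx : Fin m → ℕ := fun v => (q - 1 - d v) * (Δ ^ 2 + 1) + (c v : ℕ) + 1 with hidx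
  have hidx_le : ∀ v, idx v ≤ t - 1 := by
    intro v
    have h2 : (q - 1 - d v) * (Δ ^ 2 + 1) ≤ (q - 1) * (Δ ^ 2 + 1) :=
      Nat.mul_le_mul_right _ (Nat.sub_le _ _)
    have h3 : (q - 1) * (Δ ^ 2 + 1) + (Δ ^ 2 + 1) = q * (Δ ^ 2 + 1) := by
      rw [← Nat.succ_mul]; congr 1; omega
    have hcv : (c v : ℕ) < Δ ^ 2 + 1 := (c v).isLt
    have h4 : t - 1 = q * (Δ ^ 2 + 1) := by rw [ht, mul_comm]; omega
    rw [h4]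
    simp only [hidx]
    linarith
  have hidx_lt_t : ∀ v, idx v < t := by
    intro v; have := hidx_le v; omega
  have hidx_pos : ∀ v, 1 ≤ idx v := by
    intro v; simp only [hidx]; omega
  have hmono : ∀ u w : Fin m, d u < d w → idx w < idx u := by
    intro u w hlt
    have hq1 := hdle w
    have hq2 := hdle u
    have h2 : (q - 1 - d w) + 1 ≤ q - 1 - d u := by omega
    have h3 : ((q - 1 - d w) + 1) * (Δ ^ 2 + 1) ≤ (q - 1 - d u) * (Δ ^ 2 + 1) :=
      Nat.mul_le_mul_right _ h2
    have h4 : ((q - 1 - d w) + 1) * (Δ ^ 2 + 1)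
        = (q - 1 - d w) * (Δ ^ 2 + 1) + (Δ ^ 2 + 1) := by ring
    have hcw : (c w : ℕ) < Δ ^ 2 + 1 := (c w).isLt
    simp only [hidx]
    linarith
  have hidx_inj : ∀ u w : Fin m, idx u = idx w → c u = c w := by
    intro u w h
    have hdeq : d u = d w := by
      by_contra hne
      rcases Nat.lt_or_ge (d u) (d w) with hlt | hge
      · have := hmono u w hlt; omega
      · have hlt : d w < d u := by omega
        have := hmono w u hlt; omega
    simp only [hidx, hdeq] at h
    exact Fin.ext (by omega)
  -- choose the set of isolated vertices
  have hiso' : ⌊ε * m⌋₊ ≤ ({v : Fin m | ∀ w, ¬ H.Adj v w}).ncard := by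
    rwa [Nat.card_coe_set_eq] at hiso
  obtain ⟨S, hSsub, hScard⟩ := Set.exists_subset_card_eq hiso'
  have hSiso : ∀ v ∈ S, ∀ w, ¬ H.Adj v w := fun v hv => hSsub hv
  -- the partition
  set W : ℕ → Set (Fin m) := fun i => if i = t then S else {v | v ∉ S ∧ idx v = i} with hW
  have hWmem : ∀ i, i ≠ t → ∀ v, v ∈ W i ↔ v ∉ S ∧ idx v = i := by
    intro i hi v; simp [hW, hi]
  have hWt : W t = S := by simp [hW]
  refine ⟨W, ?_, ?_, ?_, ?_, ?_, ?_, ?_⟩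
  · -- disjointness
    intro i hi j hj hij
    rw [Set.disjoint_left]
    intro v hvi hvj
    by_cases hit : i = t
    · have hjt : j ≠ t := fun h => hij (hit.trans h.symm)
      rw [hWmem j hjt] at hvj
      rw [hit, hWt] at hvi
      exact hvj.1 hvi
    · by_cases hjt : j = t
      · rw [hWmem i hit] at hvi
        rw [hjt, hWt] at hvj
        exact hvi.1 hvj
      · rw [hWmem i hit] at hvi
        rw [hWmem j hjt] at hvj
        exact hij (hvi.2 ▸ hvj.2 ▸ rfl)
  · -- union is everything
    rw [Set.eq_univ_iff_forall]
    intro v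
    simp only [Set.mem_iUnion, Finset.mem_range]
    by_cases hv : v ∈ S
    · exact ⟨t, by omega, by rw [hWt]; exact hv⟩
    · refine ⟨idx v, by have := hidx_lt_t v; omega, ?_⟩
      rw [hWmem (idx v) (Nat.ne_of_lt (hidx_lt_t v)) v]
      exact ⟨hv, rfl⟩
  · -- cardinality of W t
    rw [hWt, Nat.card_coe_set_eq, hScard]
  · -- W 0 is the external neighborhood of W t
    ext v
    simp only [Set.mem_setOf_eq]
    constructor
    · intro hv
      rw [hWmem 0 (by omega) v] at hv
      have := hidx_pos v
      omega
    · rintro ⟨-, u, hu, hadj⟩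
      rw [hWt] at hu
      exact absurd hadj (hSiso u hu v)
  · -- W t is 3-independent
    intro u hu v hv hne p
    rw [hWt] at hu
    cases p with
    | nil => exact absurd rfl hne
    | cons h _ => exact absurd h (hSiso u hu _)
  · -- each W i is 2-independent
    intro i h1 h2 u hu v hv hne p
    have hit : i ≠ t := by omega
    rw [hWmem i hit] at hu hv
    have hcuv : c u = c v := hidx_inj u v (hu.2.trans hv.2.symm)
    have hnadj : ∀ x : Fin m, ¬ (H.Adj u v ∨ ∃ x, H.Adj u x ∧ H.Adj x v) := by
      intro _ habs
      exact hc u v ⟨hne, habs⟩ hcuv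
    cases p with
    | nil => exact absurd rfl hne
    | cons h p' =>
      cases p' with
      | nil => exact absurd (Or.inl h) (hnadj u)
      | cons h' p'' =>
        simp only [SimpleGraph.Walk.length_cons]
        by_cases h0 : p''.length = 0
        · have heq := SimpleGraph.Walk.eq_of_length_eq_zero h0
          exact absurd (Or.inr ⟨_, h, heq ▸ h'⟩) (hnadj u)
        · omega
  · -- bounded back-degree
    intro i h1 h2 w hw
    rw [Nat.card_coe_set_eq]
    by_cases hit : i = t
    · subst hit
      rw [hWt] at hw
      have hempty : {v | H.Adj w v ∧ ∃ j < t, v ∈ W j} = ∅ := by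
        rw [Set.eq_empty_iff_forall_notMem]
        rintro v ⟨hadj, -⟩
        exact hSiso w hw v hadj
      rw [hempty, Set.ncard_empty]
      omega
    · rw [hWmem i hit] at hw
      by_cases hd0 : d w = 0
      · have hdw := hzero w hd0
        have hsub : {v | H.Adj w v ∧ ∃ j < i, v ∈ W j} ⊆ H.neighborSet w :=
          fun v hv => hv.1
        calc ({v | H.Adj w v ∧ ∃ j < i, v ∈ W j}).ncard
            ≤ (H.neighborSet w).ncard := Set.ncard_le_ncard hsub (Set.toFinite _)
          _ ≤ Δ - 1 := by rwa [← Nat.card_coe_set_eq]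
      · obtain ⟨u, hadj, hdu⟩ := hstep w (by omega)
        have hui : u ∉ {v | H.Adj w v ∧ ∃ j < i, v ∈ W j} := by
          rintro ⟨-, j, hj, hu⟩
          have hjt : j ≠ t := by have := hidx_lt_t w; omega
          rw [hWmem j hjt] at hu
          have h5 := hmono u w hdu
          have h6 := hw.2
          omega
        have hsub : {v | H.Adj w v ∧ ∃ j < i, v ∈ W j} ⊆ H.neighborSet w \ {u} := by
          intro v hv
          refine ⟨hv.1, ?_⟩
          intro he
          rw [Set.mem_singleton_iff] at he
          exact hui (he ▸ hv)
        calc ({v | H.Adj w v ∧ ∃ j < i, v ∈ W j}).ncard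
            ≤ (H.neighborSet w \ {u}).ncard := Set.ncard_le_ncard hsub (Set.toFinite _)
          _ = (H.neighborSet w).ncard - 1 :=
            Set.ncard_diff_singleton_of_mem hadj
          _ ≤ Δ - 1 := by
            have := hdeg w
            rw [Nat.card_coe_set_eq] at this
            omega
end

section
/- Let Δ ≥ 1 be an integer and let ε ∈ (0, 1). If p = p(n) satisfies p(n) · n^{2/(Δ+1)} → 0 as n → ∞, then asymptotically almost surely G(n, p(n)) does not contain ⌊(1−ε)n/(Δ+1)⌋ pairwise vertex-disjoint copies of the complete graph K_{Δ+1}; in particular, asymptotically almost surely G(n, p(n)) is not H(⌊(1−ε)n⌋, Δ)-universal. -/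
open Finset Filter Real
open scoped Classical

/-- `G` contains a (not necessarily induced) copy of `H`. -/
def containsCopy {α β : Type*} (G : SimpleGraph α) (H : SimpleGraph β) : Prop :=
  ∃ f : β → α, Function.Injective f ∧ ∀ a b, H.Adj a b → G.Adj (f a) (f b)

/-- `G` is `H(N, Δ)`-universal. -/
def IsUniversal {n : ℕ} (G : SimpleGraph (Fin n)) (N Δ : ℕ) : Prop :=
  ∀ m : ℕ, m ≤ N → ∀ H : SimpleGraph (Fin m), maxDegLE H Δ → containsCopy G H

/-- `G` contains `N` pairwise vertex-disjoint copies of the complete graph `K_{Δ+1}`. -/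
def hasDisjointCliques {n : ℕ} (G : SimpleGraph (Fin n)) (N Δ : ℕ) : Prop :=
  ∃ f : Fin N → Fin (Δ + 1) → Fin n,
    Function.Injective (fun x : Fin N × Fin (Δ + 1) => f x.1 x.2) ∧
    ∀ (i : Fin N) (a b : Fin (Δ + 1)), a ≠ b → G.Adj (f i a) (f i b)


lemma edgeCount_eq {n : ℕ} (G : SimpleGraph (Fin n)) : edgeCount G = G.edgeFinset.card := by
  rw [edgeCount, Nat.card_eq_fintype_card, SimpleGraph.edgeFinset_card]

lemma sum_powerset_pow {ι : Type*} (s : Finset ι) (p q : ℝ) :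
    ∑ t ∈ s.powerset, p ^ t.card * q ^ (s.card - t.card) = (p + q) ^ s.card := by
  have h := Finset.prod_add (fun _ : ι => p) (fun _ : ι => q) s
  simp only [Finset.prod_const] at h
  rw [h]
  refine Finset.sum_congr rfl fun t ht => ?_
  rw [Finset.card_sdiff_of_subset (Finset.mem_powerset.mp ht)]

lemma sum_weight_superset (n : ℕ) (p : ℝ) (S : Finset (Sym2 (Fin n)))
    (hS : S ⊆ (⊤ : SimpleGraph (Fin n)).edgeFinset) :
    ∑ G : SimpleGraph (Fin n),
      (if S ⊆ G.edgeFinset then p ^ edgeCount G * (1 - p) ^ (n.choose 2 - edgeCount G) else 0)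
      = p ^ S.card := by
  set E := (⊤ : SimpleGraph (Fin n)).edgeFinset with hE
  have hcardE : E.card = n.choose 2 := by
    rw [hE, SimpleGraph.card_edgeFinset_top_eq_card_choose_two, Fintype.card_fin]
  set F : Finset (Sym2 (Fin n)) → ℝ :=
    fun T => if S ⊆ T then p ^ T.card * (1 - p) ^ (n.choose 2 - T.card) else 0 with hF
  have step1 : ∑ G : SimpleGraph (Fin n),
      (if S ⊆ G.edgeFinset then p ^ edgeCount G * (1 - p) ^ (n.choose 2 - edgeCount G) else 0)
      = ∑ T ∈ E.powerset, F T := by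
    refine Finset.sum_nbij' (i := fun G => G.edgeFinset)
      (j := fun T => SimpleGraph.fromEdgeSet ↑T) ?_ ?_ ?_ ?_ ?_
    · intro G _
      exact Finset.mem_powerset.mpr (SimpleGraph.edgeFinset_mono le_top)
    · intro T _; exact Finset.mem_univ _
    · intro G _
      simp only [SimpleGraph.coe_edgeFinset, SimpleGraph.fromEdgeSet_edgeSet]
    · intro T hT
      have hnd : ∀ e ∈ T, ¬ e.IsDiag := by
        intro e he
        have : e ∈ (⊤ : SimpleGraph (Fin n)).edgeSet := by
          rw [← SimpleGraph.mem_edgeFinset]; exact Finset.mem_powerset.mp hT he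
        exact SimpleGraph.not_isDiag_of_mem_edgeSet _ this
      have hes : (SimpleGraph.fromEdgeSet (↑T : Set (Sym2 (Fin n)))).edgeSet = ↑T := by
        rw [SimpleGraph.edgeSet_fromEdgeSet]
        ext e
        simp only [Set.mem_diff, Set.mem_setOf_eq, Finset.mem_coe, and_iff_left_iff_imp]
        exact fun he => hnd e he
      apply Finset.coe_injective
      rw [SimpleGraph.coe_edgeFinset, hes]
    · intro G _
      rw [edgeCount_eq, hF]
  rw [step1]
  have step2 : ∑ T ∈ E.powerset, F T
      = ∑ T ∈ E.powerset.filter (fun T => S ⊆ T), p ^ T.card * (1 - p) ^ (n.choose 2 - T.card) := by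
    rw [Finset.sum_filter]
  rw [step2]
  have step3 : ∑ T ∈ E.powerset.filter (fun T => S ⊆ T),
      p ^ T.card * (1 - p) ^ (n.choose 2 - T.card)
      = ∑ U ∈ (E \ S).powerset, p ^ S.card * (p ^ U.card * (1 - p) ^ ((E \ S).card - U.card)) := by
    refine Finset.sum_nbij' (i := fun T => T \ S) (j := fun U => U ∪ S) ?_ ?_ ?_ ?_ ?_
    · intro T hT
      rw [Finset.mem_filter, Finset.mem_powerset] at hT
      exact Finset.mem_powerset.mpr (Finset.sdiff_subset_sdiff hT.1 (le_refl _))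
    · intro U hU
      rw [Finset.mem_powerset] at hU
      rw [Finset.mem_filter, Finset.mem_powerset]
      constructor
      · exact Finset.union_subset (hU.trans (Finset.sdiff_subset)) hS
      · exact Finset.subset_union_right
    · intro T hT
      rw [Finset.mem_filter] at hT
      exact Finset.sdiff_union_of_subset hT.2
    · intro U hU
      rw [Finset.mem_powerset] at hU
      have hdisj : Disjoint U S := Finset.disjoint_left.mpr
        (fun e he => (Finset.mem_sdiff.mp (hU he)).2)
      exact Finset.union_sdiff_cancel_right hdisj
    · intro T hT
      rw [Finset.mem_filter, Finset.mem_powerset] at hT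
      have hTS : S ⊆ T := hT.2
      have h1 : (T \ S).card + S.card = T.card := Finset.card_sdiff_add_card_eq_card hTS
      have h2 : (E \ S).card = n.choose 2 - S.card := by
        rw [Finset.card_sdiff_of_subset hS, hcardE]
      have h3 : n.choose 2 - ((T \ S).card + S.card)
          = n.choose 2 - S.card - (T \ S).card := by omega
      rw [← h1, pow_add, h3, h2]
      ring
  rw [step3, ← Finset.mul_sum, sum_powerset_pow]
  have : p + (1 - p) = 1 := by ring
  rw [this, one_pow, mul_one]
noncomputable def cliqueCount (n Δ : ℕ) (G : SimpleGraph (Fin n)) : ℕ :=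
  (Finset.univ.filter (fun g : Fin (Δ + 1) → Fin n =>
    Function.Injective g ∧ ∀ a b, a ≠ b → G.Adj (g a) (g b))).card

noncomputable def cliqueEdges {n : ℕ} (Δ : ℕ) (g : Fin (Δ + 1) → Fin n) :
    Finset (Sym2 (Fin n)) :=
  ((⊤ : SimpleGraph (Fin (Δ + 1))).edgeFinset).image (Sym2.map g)

lemma cliqueEdges_subset {n Δ : ℕ} (g : Fin (Δ + 1) → Fin n) (hg : Function.Injective g) :
    cliqueEdges Δ g ⊆ (⊤ : SimpleGraph (Fin n)).edgeFinset := by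
  intro e he
  rw [cliqueEdges, Finset.mem_image] at he
  obtain ⟨e', he', rfl⟩ := he
  rw [SimpleGraph.mem_edgeFinset] at he' ⊢
  induction e' using Sym2.ind with
  | _ a b =>
    simp only [SimpleGraph.mem_edgeSet, SimpleGraph.top_adj] at he'
    simp only [Sym2.map_pair_eq, SimpleGraph.mem_edgeSet, SimpleGraph.top_adj]
    exact fun h => he' (hg h)

lemma cliqueEdges_card {n Δ : ℕ} (g : Fin (Δ + 1) → Fin n) (hg : Function.Injective g) :
    (cliqueEdges Δ g).card = (Δ + 1).choose 2 := by
  rw [cliqueEdges, Finset.card_image_of_injective _ (Sym2.map.injective hg),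
    SimpleGraph.card_edgeFinset_top_eq_card_choose_two, Fintype.card_fin]

lemma cliqueEdges_iff {n Δ : ℕ} (g : Fin (Δ + 1) → Fin n) (G : SimpleGraph (Fin n)) :
    (cliqueEdges Δ g ⊆ G.edgeFinset) ↔ (∀ a b, a ≠ b → G.Adj (g a) (g b)) := by
  constructor
  · intro h a b hab
    have : s(g a, g b) ∈ cliqueEdges Δ g := by
      rw [cliqueEdges, Finset.mem_image]
      exact ⟨s(a, b), by simp [SimpleGraph.mem_edgeFinset, hab], Sym2.map_pair_eq g a b⟩
    have := h this
    rwa [SimpleGraph.mem_edgeFinset, SimpleGraph.mem_edgeSet] at this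
  · intro h e he
    rw [cliqueEdges, Finset.mem_image] at he
    obtain ⟨e', he', rfl⟩ := he
    induction e' using Sym2.ind with
    | _ a b =>
      simp only [SimpleGraph.mem_edgeFinset, SimpleGraph.mem_edgeSet,
        SimpleGraph.top_adj] at he'
      rw [Sym2.map_pair_eq, SimpleGraph.mem_edgeFinset, SimpleGraph.mem_edgeSet]
      exact h a b he'

lemma le_cliqueCount {n Δ N : ℕ} (G : SimpleGraph (Fin n))
    (h : hasDisjointCliques G N Δ) : N ≤ cliqueCount n Δ G := by
  obtain ⟨f, hinj, hcl⟩ := h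
  have hmem : ∀ i : Fin N, f i ∈ Finset.univ.filter (fun g : Fin (Δ + 1) → Fin n =>
      Function.Injective g ∧ ∀ a b, a ≠ b → G.Adj (g a) (g b)) := by
    intro i
    rw [Finset.mem_filter]
    refine ⟨Finset.mem_univ _, ?_, hcl i⟩
    intro a b hab
    have h2 : ((i, a) : Fin N × Fin (Δ + 1)) = (i, b) := hinj hab
    exact congrArg Prod.snd h2
  have hfinj : Function.Injective f := by
    intro i j hij
    have h0 : f i 0 = f j 0 := by rw [hij]
    have h2 : ((i, (0 : Fin (Δ + 1)))) = (j, (0 : Fin (Δ + 1))) := hinj h0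
    exact congrArg Prod.fst h2
  calc N = (Finset.univ : Finset (Fin N)).card := by simp
    _ ≤ _ := Finset.card_le_card_of_injOn f (fun i _ => hmem i) (hfinj.injOn)

lemma weight_nonneg {n : ℕ} (p : ℝ) (hp0 : 0 ≤ p) (hp1 : p ≤ 1) (G : SimpleGraph (Fin n)) :
    0 ≤ p ^ edgeCount G * (1 - p) ^ (n.choose 2 - edgeCount G) :=
  mul_nonneg (pow_nonneg hp0 _) (pow_nonneg (by linarith) _)

lemma sum_weight_one (n : ℕ) (p : ℝ) :
    ∑ G : SimpleGraph (Fin n), p ^ edgeCount G * (1 - p) ^ (n.choose 2 - edgeCount G) = 1 := by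
  have := sum_weight_superset n p ∅ (Finset.empty_subset _)
  simpa using this

lemma gnpProb_nonneg (n : ℕ) (p : ℝ) (hp0 : 0 ≤ p) (hp1 : p ≤ 1)
    (P : SimpleGraph (Fin n) → Prop) : 0 ≤ gnpProb n p P := by
  apply Finset.sum_nonneg
  intro G _
  split
  · exact weight_nonneg p hp0 hp1 G
  · exact le_refl 0

lemma gnpProb_mono (n : ℕ) (p : ℝ) (hp0 : 0 ≤ p) (hp1 : p ≤ 1)
    (P Q : SimpleGraph (Fin n) → Prop) (h : ∀ G, P G → Q G) :
    gnpProb n p P ≤ gnpProb n p Q := by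
  apply Finset.sum_le_sum
  intro G _
  by_cases hP : P G
  · rw [if_pos hP, if_pos (h G hP)]
  · rw [if_neg hP]
    split
    · exact weight_nonneg p hp0 hp1 G
    · exact le_refl 0

lemma gnpProb_le_one (n : ℕ) (p : ℝ) (hp0 : 0 ≤ p) (hp1 : p ≤ 1)
    (P : SimpleGraph (Fin n) → Prop) : gnpProb n p P ≤ 1 := by
  rw [← sum_weight_one n p]
  apply Finset.sum_le_sum
  intro G _
  split
  · exact le_refl _
  · exact weight_nonneg p hp0 hp1 G

lemma gnpProb_not (n : ℕ) (p : ℝ) (P : SimpleGraph (Fin n) → Prop) :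
    gnpProb n p (fun G => ¬ P G) = 1 - gnpProb n p P := by
  rw [eq_sub_iff_add_eq, gnpProb, gnpProb, ← Finset.sum_add_distrib]
  conv_rhs => rw [← sum_weight_one n p]
  refine Finset.sum_congr rfl fun G _ => ?_
  by_cases hP : P G <;> simp [hP]

lemma expectation_le (n Δ : ℕ) (p : ℝ) (hp0 : 0 ≤ p) :
    ∑ G : SimpleGraph (Fin n),
      (p ^ edgeCount G * (1 - p) ^ (n.choose 2 - edgeCount G)) * (cliqueCount n Δ G : ℝ)
    ≤ (n : ℝ) ^ (Δ + 1) * p ^ ((Δ + 1).choose 2) := by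
  have key : ∀ G : SimpleGraph (Fin n),
      (p ^ edgeCount G * (1 - p) ^ (n.choose 2 - edgeCount G)) * (cliqueCount n Δ G : ℝ)
      = ∑ g : Fin (Δ + 1) → Fin n,
        if (Function.Injective g ∧ ∀ a b, a ≠ b → G.Adj (g a) (g b))
        then p ^ edgeCount G * (1 - p) ^ (n.choose 2 - edgeCount G) else 0 := by
    intro G
    rw [Finset.sum_ite, Finset.sum_const, Finset.sum_const_zero, add_zero, nsmul_eq_mul,
      cliqueCount, mul_comm]
  calc ∑ G : SimpleGraph (Fin n),
      (p ^ edgeCount G * (1 - p) ^ (n.choose 2 - edgeCount G)) * (cliqueCount n Δ G : ℝ)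
      = ∑ G : SimpleGraph (Fin n), ∑ g : Fin (Δ + 1) → Fin n,
        if (Function.Injective g ∧ ∀ a b, a ≠ b → G.Adj (g a) (g b))
        then p ^ edgeCount G * (1 - p) ^ (n.choose 2 - edgeCount G) else 0 :=
        Finset.sum_congr rfl fun G _ => key G
    _ = ∑ g : Fin (Δ + 1) → Fin n, ∑ G : SimpleGraph (Fin n),
        if (Function.Injective g ∧ ∀ a b, a ≠ b → G.Adj (g a) (g b))
        then p ^ edgeCount G * (1 - p) ^ (n.choose 2 - edgeCount G) else 0 :=
        Finset.sum_comm
    _ ≤ ∑ g : Fin (Δ + 1) → Fin n, p ^ ((Δ + 1).choose 2) := by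
        apply Finset.sum_le_sum
        intro g _
        by_cases hg : Function.Injective g
        · have : ∀ G : SimpleGraph (Fin n),
              (if (Function.Injective g ∧ ∀ a b, a ≠ b → G.Adj (g a) (g b))
               then p ^ edgeCount G * (1 - p) ^ (n.choose 2 - edgeCount G) else 0)
              = (if cliqueEdges Δ g ⊆ G.edgeFinset
               then p ^ edgeCount G * (1 - p) ^ (n.choose 2 - edgeCount G) else 0) := by
            intro G
            congr 1
            rw [eq_iff_iff, cliqueEdges_iff]
            exact ⟨fun h => h.2, fun h => ⟨hg, h⟩⟩
          rw [Finset.sum_congr rfl (fun G _ => this G),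
            sum_weight_superset n p _ (cliqueEdges_subset g hg), cliqueEdges_card g hg]
        · have : ∀ G : SimpleGraph (Fin n),
              (if (Function.Injective g ∧ ∀ a b, a ≠ b → G.Adj (g a) (g b))
               then p ^ edgeCount G * (1 - p) ^ (n.choose 2 - edgeCount G) else 0) = 0 := by
            intro G
            rw [if_neg (fun h => hg h.1)]
          rw [Finset.sum_congr rfl (fun G _ => this G), Finset.sum_const_zero]
          exact pow_nonneg hp0 _
    _ = (n : ℝ) ^ (Δ + 1) * p ^ ((Δ + 1).choose 2) := by
        rw [Finset.sum_const, Finset.card_univ, nsmul_eq_mul]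
        congr 1
        rw [Fintype.card_fun, Fintype.card_fin, Fintype.card_fin]
        push_cast
        ring

lemma prob_mul_le (n Δ N : ℕ) (p : ℝ) (hp0 : 0 ≤ p) (hp1 : p ≤ 1) :
    gnpProb n p (fun G => hasDisjointCliques G N Δ) * N
    ≤ (n : ℝ) ^ (Δ + 1) * p ^ ((Δ + 1).choose 2) := by
  rw [gnpProb, Finset.sum_mul]
  refine le_trans (Finset.sum_le_sum (g := fun G =>
    (p ^ edgeCount G * (1 - p) ^ (n.choose 2 - edgeCount G)) * (cliqueCount n Δ G : ℝ))
    ?_) (expectation_le n Δ p hp0)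
  intro G _
  by_cases hP : hasDisjointCliques G N Δ
  · rw [if_pos hP]
    apply mul_le_mul_of_nonneg_left _ (weight_nonneg p hp0 hp1 G)
    exact_mod_cast le_cliqueCount G hP
  · rw [if_neg hP, zero_mul]
    exact mul_nonneg (weight_nonneg p hp0 hp1 G) (Nat.cast_nonneg _)


lemma universal_implies_cliques {n : ℕ} (Δ : ℕ) (G : SimpleGraph (Fin n)) (N M : ℕ)
    (hNM : N * (Δ + 1) ≤ M) (h : IsUniversal G M Δ) : hasDisjointCliques G N Δ := by
  set e := (finProdFinEquiv : Fin N × Fin (Δ + 1) ≃ Fin (N * (Δ + 1)))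
  set H : SimpleGraph (Fin (N * (Δ + 1))) :=
    { Adj := fun x y => (e.symm x).1 = (e.symm y).1 ∧ x ≠ y
      symm := ⟨fun x y hxy => ⟨hxy.1.symm, hxy.2.symm⟩⟩
      loopless := ⟨fun x hx => hx.2 rfl⟩ } with hHdef
  have hmax : maxDegLE H Δ := by
    intro v
    have hinj : ∃ φ : H.neighborSet v → {b : Fin (Δ + 1) // b ≠ (e.symm v).2},
        Function.Injective φ := by
      refine ⟨fun y => ⟨(e.symm (y : Fin (N * (Δ + 1)))).2, ?_⟩, ?_⟩
      · intro hcontra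
        obtain ⟨y, hy⟩ := y
        simp only [SimpleGraph.mem_neighborSet, hHdef] at hy
        have : e.symm y = e.symm v := Prod.ext hy.1.symm hcontra
        exact hy.2 (e.symm.injective this).symm
      · rintro ⟨y, hy⟩ ⟨y', hy'⟩ hyy
        simp only [SimpleGraph.mem_neighborSet, hHdef] at hy hy'
        have h2 : (e.symm y).2 = (e.symm y').2 := congrArg Subtype.val hyy
        have h1 : (e.symm y).1 = (e.symm y').1 := hy.1.symm.trans hy'.1
        exact Subtype.ext (e.symm.injective (Prod.ext h1 h2))
    obtain ⟨φ, hφ⟩ := hinj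
    calc Nat.card (H.neighborSet v) ≤ Nat.card {b : Fin (Δ + 1) // b ≠ (e.symm v).2} :=
          Nat.card_le_card_of_injective φ hφ
      _ = Δ := by
          rw [Nat.card_eq_fintype_card]
          have : Fintype.card {b : Fin (Δ + 1) // b ≠ (e.symm v).2}
              = Fintype.card (Fin (Δ + 1)) - 1 := by
            rw [Fintype.card_subtype_compl, Fintype.card_subtype_eq]
          rw [this, Fintype.card_fin]; omega
  obtain ⟨f, finj, fadj⟩ := h (N * (Δ + 1)) hNM H hmax
  refine ⟨fun i a => f (e (i, a)), ?_, ?_⟩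
  · intro x y hxy
    simp only at hxy
    have h1 : e (x.1, x.2) = e (y.1, y.2) := finj hxy
    have := e.injective h1
    exact Prod.ext (congrArg Prod.fst this) (congrArg Prod.snd this)
  · intro i a b hab
    apply fadj
    constructor
    · rw [Equiv.symm_apply_apply, Equiv.symm_apply_apply]
    · intro hcontra
      exact hab (congrArg Prod.snd (e.injective hcontra))

/-- Below `n^{-2/(Δ+1)}`, a.a.s. `G(n,p)` contains no `⌊(1-ε)n/(Δ+1)⌋` disjoint copies of
`K_{Δ+1}`; in particular it is a.a.s. not `H(⌊(1-ε)n⌋, Δ)`-universal. -/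
theorem lower_bound_universality
    (Δ : ℕ) (hΔ : 1 ≤ Δ) (ε : ℝ) (hε : ε ∈ Set.Ioo (0 : ℝ) 1)
    (p : ℕ → ℝ) (hp : ∀ n, 0 ≤ p n ∧ p n ≤ 1)
    (hsmall : Tendsto (fun n : ℕ => p n * (n : ℝ) ^ ((2 : ℝ) / ((Δ : ℝ) + 1)))
      atTop (nhds 0)) :
    Tendsto (fun n : ℕ =>
        gnpProb n (p n) (fun G => ¬ hasDisjointCliques G ⌊(1 - ε) * n / ((Δ : ℝ) + 1)⌋₊ Δ))
      atTop (nhds 1) ∧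
    Tendsto (fun n : ℕ =>
        gnpProb n (p n) (fun G => ¬ IsUniversal G ⌊(1 - ε) * n⌋₊ Δ))
      atTop (nhds 1) := by
  obtain ⟨hε0, hε1⟩ := hε
  have hε' : (0:ℝ) < 1 - ε := by linarith
  set K := (Δ + 1).choose 2 with hKdef
  have hKpos : 0 < K := Nat.choose_pos (by omega)
  have hdvd : 2 ∣ (Δ + 1) * Δ := by rw [mul_comm]; exact (Nat.even_mul_succ_self Δ).two_dvd
  have hK2 : 2 * K = Δ * (Δ + 1) := by
    rw [hKdef, Nat.choose_two_right]
    simp only [Nat.add_sub_cancel]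
    rw [Nat.mul_div_cancel' hdvd, mul_comm]
  set q : ℕ → ℝ := fun n => p n * (n : ℝ) ^ ((2:ℝ) / ((Δ:ℝ) + 1)) with hq
  set C : ℝ := 2 * ((Δ:ℝ) + 1) / (1 - ε) with hC
  set N : ℕ → ℕ := fun n => ⌊(1 - ε) * (n:ℝ) / ((Δ:ℝ) + 1)⌋₊ with hNdef
  have hqnn : ∀ n, 0 ≤ q n := fun n =>
    mul_nonneg (hp n).1 (Real.rpow_nonneg (Nat.cast_nonneg n) _)
  have hA0 : Tendsto (fun n => gnpProb n (p n) (fun G => hasDisjointCliques G (N n) Δ))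
      atTop (nhds 0) := by
    have hRHS : Tendsto (fun n => (q n) ^ K * C) atTop (nhds 0) := by
      have h1 := hsmall.pow K
      rw [zero_pow hKpos.ne'] at h1
      simpa using h1.mul_const C
    apply tendsto_of_tendsto_of_tendsto_of_le_of_le' tendsto_const_nhds hRHS
    · filter_upwards with n
      exact gnpProb_nonneg n (p n) (hp n).1 (hp n).2 _
    · have hx : Tendsto (fun n : ℕ => (1 - ε) * (n:ℝ) / ((Δ:ℝ) + 1)) atTop atTop := by
        apply Tendsto.atTop_div_const (by positivity)
        exact tendsto_natCast_atTop_atTop.const_mul_atTop hε'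
      filter_upwards [hx.eventually_ge_atTop 2, eventually_ge_atTop 1] with n hn2 hn1
      have hnpos : (0:ℝ) < (n:ℝ) := by exact_mod_cast Nat.lt_of_lt_of_le Nat.zero_lt_one hn1
      set x := (1 - ε) * (n:ℝ) / ((Δ:ℝ) + 1) with hxdef
      have hxfloor : x - 1 < (N n : ℝ) := Nat.sub_one_lt_floor x
      have hNhalf : x / 2 ≤ (N n : ℝ) := by linarith
      have hNpos : (0:ℝ) < (N n : ℝ) := by linarith
      have hrp : ((n:ℝ) ^ ((2:ℝ) / ((Δ:ℝ) + 1))) ^ K = (n:ℝ) ^ Δ := by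
        rw [← Real.rpow_natCast ((n:ℝ) ^ ((2:ℝ) / ((Δ:ℝ) + 1))) K,
          ← Real.rpow_mul hnpos.le]
        have hxx : (2:ℝ) / ((Δ:ℝ) + 1) * (K:ℝ) = (Δ:ℝ) := by
          have hc : ((2 * K : ℕ) : ℝ) = ((Δ * (Δ + 1) : ℕ) : ℝ) := by rw [hK2]
          push_cast at hc
          field_simp
          linarith
        rw [hxx, Real.rpow_natCast]
      have hid : (n:ℝ) ^ (Δ + 1) * (p n) ^ K = (q n) ^ K * (n:ℝ) := by
        rw [hq]
        simp only
        rw [mul_pow, hrp, pow_succ]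
        ring
      have hmain := prob_mul_le n Δ (N n) (p n) (hp n).1 (hp n).2
      rw [hid] at hmain
      have hA_le : gnpProb n (p n) (fun G => hasDisjointCliques G (N n) Δ)
          ≤ (q n) ^ K * ((n:ℝ) / (N n : ℝ)) := by
        rw [← mul_div_assoc]
        exact (le_div_iff₀ hNpos).mpr hmain
      have hfrac : (n:ℝ) / (N n : ℝ) ≤ C := by
        have h1 : (n:ℝ) / (N n : ℝ) ≤ (n:ℝ) / (x / 2) := by
          gcongr
        have h2 : (n:ℝ) / (x / 2) = C := by
          rw [hxdef, hC]
          field_simp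
        linarith
      calc gnpProb n (p n) (fun G => hasDisjointCliques G (N n) Δ)
          ≤ (q n) ^ K * ((n:ℝ) / (N n : ℝ)) := hA_le
        _ ≤ (q n) ^ K * C := by
            apply mul_le_mul_of_nonneg_left hfrac (pow_nonneg (hqnn n) K)
  have hnot : Tendsto (fun n => gnpProb n (p n)
      (fun G => ¬ hasDisjointCliques G (N n) Δ)) atTop (nhds 1) := by
    have h1 : Tendsto (fun n => 1 - gnpProb n (p n)
        (fun G => hasDisjointCliques G (N n) Δ)) atTop (nhds (1 - 0)) :=
      Tendsto.const_sub 1 hA0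
    rw [sub_zero] at h1
    exact h1.congr fun n => (gnpProb_not n (p n) _).symm
  refine ⟨hnot, ?_⟩
  have hub : ∀ n, gnpProb n (p n) (fun G => ¬ hasDisjointCliques G (N n) Δ)
      ≤ gnpProb n (p n) (fun G => ¬ IsUniversal G ⌊(1 - ε) * (n:ℝ)⌋₊ Δ) := by
    intro n
    apply gnpProb_mono n (p n) (hp n).1 (hp n).2
    intro G hG hU
    apply hG
    refine universal_implies_cliques Δ G (N n) ⌊(1 - ε) * (n:ℝ)⌋₊ ?_ hU
    rw [Nat.le_floor_iff (mul_nonneg hε'.le (Nat.cast_nonneg n))]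
    have h1 : (N n : ℝ) ≤ (1 - ε) * (n:ℝ) / ((Δ:ℝ) + 1) :=
      Nat.floor_le (div_nonneg (mul_nonneg hε'.le (Nat.cast_nonneg n)) (by positivity))
    have h2 : ((N n * (Δ + 1) : ℕ) : ℝ) = (N n : ℝ) * ((Δ:ℝ) + 1) := by push_cast; ring
    rw [h2]
    calc (N n : ℝ) * ((Δ:ℝ) + 1)
        ≤ ((1 - ε) * (n:ℝ) / ((Δ:ℝ) + 1)) * ((Δ:ℝ) + 1) := by
          apply mul_le_mul_of_nonneg_right h1 (by positivity)
      _ = (1 - ε) * (n:ℝ) := by field_simp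
  have hle1 : ∀ n, gnpProb n (p n) (fun G => ¬ IsUniversal G ⌊(1 - ε) * (n:ℝ)⌋₊ Δ) ≤ 1 :=
    fun n => gnpProb_le_one n (p n) (hp n).1 (hp n).2 _
  exact tendsto_of_tendsto_of_tendsto_of_le_of_le hnot tendsto_const_nhds hub hle1
end
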